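/- arXiv:1204.3709 — 4 statements merged into one kernel-verified Lean document; each statement's English description precedes it below -/
import Mathlib

section
/- Let n be odd, suppose that for every (n−1)-admissible list M′ there is an (M′)-decomposition of K_{n−1}, and suppose that the list (M, 3^{(n−1)/2}) obtained from M by adjoining (n−1)/2 occurrences of 3 is an n-ancestor list with ν_n(M) = 0. Then there is an (M, 3^{(n−1)/2})-decomposition of K_n. -/
open SimpleGraph

/-- A subgraph `H` of a graph is a cycle with `m` edges: it is connected,
every vertex of `H` has exactly two neighbours in `H`, and `H` has `m` edges. -/
def IsCycleSub {V : Type*} {G : SimpleGraph V} (H : G.Subgraph) (m : ℕ) : Prop :=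
  H.coe.Connected ∧ (∀ v ∈ H.verts, (H.neighborSet v).ncard = 2) ∧ H.edgeSet.ncard = m

/-- An `(M)`-decomposition of an even graph `G`: a family of cycles, with lengths
given by the entries of the list `M`, whose edge sets partition the edge set of `G`. -/
def CycleDecomp {V : Type*} (G : SimpleGraph V) (M : List ℕ) : Prop :=
  ∃ f : Fin M.length → G.Subgraph,
    (∀ i, IsCycleSub (f i) (M.get i)) ∧
    (∀ i j, i ≠ j → Disjoint (f i).edgeSet (f j).edgeSet) ∧
    (⋃ i, (f i).edgeSet) = G.edgeSet

/-- An `(M)`-decomposition of an odd graph `G`: a family of cycles with lengths given by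
the entries of `M`, together with a perfect matching, whose edge sets partition `G`. -/
def CycleDecompM {V : Type*} (G : SimpleGraph V) (M : List ℕ) : Prop :=
  ∃ (f : Fin M.length → G.Subgraph) (I : G.Subgraph),
    I.IsPerfectMatching ∧
    (∀ i, IsCycleSub (f i) (M.get i)) ∧
    (∀ i j, i ≠ j → Disjoint (f i).edgeSet (f j).edgeSet) ∧
    (∀ i, Disjoint (f i).edgeSet I.edgeSet) ∧
    ((⋃ i, (f i).edgeSet) ∪ I.edgeSet) = G.edgeSet

/-- An `(M)`-decomposition of the complete graph `K_n`: cycles only when `n` is odd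
(`K_n` is an even graph), cycles plus a perfect matching when `n` is even. -/
def KDecomp (n : ℕ) (M : List ℕ) : Prop :=
  (Odd n ∧ CycleDecomp (⊤ : SimpleGraph (Fin n)) M) ∨
  (Even n ∧ CycleDecompM (⊤ : SimpleGraph (Fin n)) M)

/-- A list `M` is `n`-admissible. -/
def Admissible (n : ℕ) (M : List ℕ) : Prop :=
  (∀ m ∈ M, 3 ≤ m ∧ m ≤ n) ∧ M.sum = n * ((n - 1) / 2)

/-- A list `M` is an `n`-ancestor list. -/
def AncestorList (n : ℕ) (M : List ℕ) : Prop :=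
  Admissible n M ∧
  (∑ i ∈ Finset.Icc 6 (n - 1), M.count i) ≤ 1 ∧
  (3 ≤ M.count 5 → (2 * M.count 4 : ℤ) ≤ (n : ℤ) - 6) ∧
  (2 ≤ M.count 5 → (3 * M.count 3 : ℤ) ≤ (n : ℤ) - 10) ∧
  (1 ≤ M.count 4 → 1 ≤ M.count 5 → (3 * M.count 3 : ℤ) ≤ (n : ℤ) - 9) ∧
  (1 ≤ M.count 4 → M.count (n - 2) = 0 ∧ M.count (n - 1) = 0) ∧
  (1 ≤ M.count 5 → M.count (n - 4) = 0 ∧ M.count (n - 3) = 0 ∧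
    M.count (n - 2) = 0 ∧ M.count (n - 1) = 0)

section Helpers

variable {V : Type*} {W : Type*}

private lemma sym2_mk_out {α : Type*} (e : Sym2 α) : s(e.out.1, e.out.2) = e := by
  exact e.out_eq

private lemma edgeSet_map' {G : SimpleGraph V} {G' : SimpleGraph W} (φ : G →g G')
    (H : G.Subgraph) : (H.map φ).edgeSet = Sym2.map φ '' H.edgeSet := by
  ext e
  induction e using Sym2.ind with
  | _ x y =>
    simp only [Subgraph.mem_edgeSet, Subgraph.map_adj, Relation.Map, Set.mem_image]
    constructor
    · rintro ⟨u, v, h, rfl, rfl⟩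
      exact ⟨s(u, v), h, rfl⟩
    · rintro ⟨e', he', hm⟩
      induction e' using Sym2.ind with
      | _ u v =>
        rw [Sym2.map_pair_eq, Sym2.eq_iff] at hm
        have hadj : H.Adj u v := Subgraph.mem_edgeSet.mp he'
        rcases hm with ⟨rfl, rfl⟩ | ⟨rfl, rfl⟩
        · exact ⟨u, v, hadj, rfl, rfl⟩
        · exact ⟨v, u, hadj.symm, rfl, rfl⟩

private lemma map_neighborSet' {G : SimpleGraph V} {G' : SimpleGraph W} (φ : G →g G')
    (hφ : Function.Injective φ) (H : G.Subgraph) (v : V) :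
    (H.map φ).neighborSet (φ v) = φ '' H.neighborSet v := by
  ext w
  simp only [Subgraph.mem_neighborSet, Subgraph.map_adj, Relation.Map, Set.mem_image]
  constructor
  · rintro ⟨u, u', h, hu, rfl⟩
    exact ⟨u', by rwa [← hφ hu], rfl⟩
  · rintro ⟨u', h, rfl⟩
    exact ⟨v, u', h, rfl, rfl⟩

private lemma isCycleSub_map {G : SimpleGraph V} {G' : SimpleGraph W} (φ : G →g G')
    (hφ : Function.Injective φ) {H : G.Subgraph} {m : ℕ} (h : IsCycleSub H m) :
    IsCycleSub (H.map φ) m := by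
  obtain ⟨hconn, hdeg, hcard⟩ := h
  refine ⟨?_, ?_, ?_⟩
  · have hsur : Function.Surjective
        (fun (u : H.verts) => (⟨φ u, u.1, u.2, rfl⟩ : (H.map φ).verts)) := by
      rintro ⟨w, u, hu, rfl⟩
      exact ⟨⟨u, hu⟩, rfl⟩
    exact Connected.map (⟨fun u => ⟨φ u, u.1, u.2, rfl⟩,
      fun {a b} hab => ⟨a.1, b.1, hab, rfl, rfl⟩⟩ : H.coe →g (H.map φ).coe) hsur hconn
  · rintro w hw
    rw [Subgraph.map_verts] at hw
    obtain ⟨u, hu, rfl⟩ := hw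
    rw [map_neighborSet' φ hφ, Set.ncard_image_of_injective _ hφ]
    exact hdeg u hu
  · rw [edgeSet_map', Set.ncard_image_of_injective _ (Sym2.map.injective hφ)]
    exact hcard

private lemma pm_card {m : ℕ} {I : (⊤ : SimpleGraph (Fin m)).Subgraph}
    (hI : I.IsPerfectMatching) : 2 * I.edgeSet.ncard = m := by
  classical
  have h1 : I.edgeSet.ncard = I.coe.edgeSet.ncard := by
    rw [← Subgraph.image_coe_edgeSet_coe,
      Set.ncard_image_of_injective _ (Sym2.map.injective Subtype.val_injective)]
  have hdeg : ∀ v : I.verts, I.coe.degree v = 1 := by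
    intro v
    rw [Subgraph.coe_degree]
    have h := (Subgraph.isMatching_iff_forall_degree.mp hI.1) v v.2
    convert h using 2
  have hsum := I.coe.sum_degrees_eq_twice_card_edges
  have hcardV : Fintype.card I.verts = m := by
    have huniv : I.verts = Set.univ := Set.eq_univ_of_forall hI.2
    have h9 : Nat.card ↥I.verts = m := by
      rw [Nat.card_coe_set_eq, huniv, Set.ncard_univ, Nat.card_eq_fintype_card,
        Fintype.card_fin]
    rwa [Nat.card_eq_fintype_card] at h9
  have h2 : I.coe.edgeSet.ncard = I.coe.edgeFinset.card := by
    rw [← Nat.card_coe_set_eq, Nat.card_eq_fintype_card, ← SimpleGraph.edgeFinset_card]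
  rw [h1, h2, ← hsum]
  refine Eq.trans (Finset.sum_congr rfl fun v _ => ?_)
    (show (∑ _v : I.verts, (1 : ℕ)) = m by simp [hcardV])
  convert hdeg v using 2

end Helpers

section Tri
variable {V : Type*}

private def triSub (a b c : V) : (⊤ : SimpleGraph V).Subgraph where
  verts := {a, b, c}
  Adj x y := x ≠ y ∧ (s(x, y) = s(a, b) ∨ s(x, y) = s(b, c) ∨ s(x, y) = s(a, c))
  adj_sub h := h.1
  edge_vert := by
    rintro x y ⟨hne, h | h | h⟩ <;>
      (rw [Sym2.eq_iff] at h; rcases h with ⟨rfl, rfl⟩ | ⟨rfl, rfl⟩ <;> simp)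
  symm := by
    constructor
    rintro x y ⟨hne, h⟩
    refine ⟨hne.symm, ?_⟩
    rwa [Sym2.eq_swap] at h

variable {a b c : V}

private lemma triSub_verts : (triSub a b c).verts = {a, b, c} := rfl

private lemma triSub_adj_iff {x y : V} :
    (triSub a b c).Adj x y ↔ x ≠ y ∧ (s(x, y) = s(a, b) ∨ s(x, y) = s(b, c) ∨ s(x, y) = s(a, c)) :=
  Iff.rfl

private lemma triSub_rot : triSub a b c = triSub b c a := by
  refine Subgraph.ext ?_ ?_
  · rw [triSub_verts, triSub_verts]
    ext x
    simp only [Set.mem_insert_iff, Set.mem_singleton_iff]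
    tauto
  · funext x y
    refine propext ?_
    constructor
    · rintro ⟨h1, h2 | h2 | h2⟩
      · exact ⟨h1, Or.inr (Or.inr (h2.trans Sym2.eq_swap))⟩
      · exact ⟨h1, Or.inl h2⟩
      · exact ⟨h1, Or.inr (Or.inl (h2.trans Sym2.eq_swap))⟩
    · rintro ⟨h1, h2 | h2 | h2⟩
      · exact ⟨h1, Or.inr (Or.inl h2)⟩
      · exact ⟨h1, Or.inr (Or.inr (h2.trans Sym2.eq_swap))⟩
      · exact ⟨h1, Or.inl (h2.trans Sym2.eq_swap)⟩

private lemma triSub_adj_of_mem (hab : a ≠ b) (hbc : b ≠ c) (hac : a ≠ c) {x y : V}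
    (hx : x ∈ ({a, b, c} : Set V)) (hy : y ∈ ({a, b, c} : Set V)) (hxy : x ≠ y) :
    (triSub a b c).Adj x y := by
  refine ⟨hxy, ?_⟩
  simp only [Set.mem_insert_iff, Set.mem_singleton_iff] at hx hy
  rcases hx with rfl | rfl | rfl <;> rcases hy with rfl | rfl | rfl <;>
    first
      | exact absurd rfl hxy
      | (simp only [Sym2.eq_iff]; tauto)

private lemma triSub_edgeSet (hab : a ≠ b) (hbc : b ≠ c) (hac : a ≠ c) :
    (triSub a b c).edgeSet = {s(a, b), s(b, c), s(a, c)} := by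
  ext e
  induction e using Sym2.ind with
  | _ x y =>
    simp only [Subgraph.mem_edgeSet, triSub_adj_iff, Set.mem_insert_iff, Set.mem_singleton_iff]
    constructor
    · rintro ⟨-, h⟩; exact h
    · intro h
      refine ⟨?_, h⟩
      rintro rfl
      rcases h with h | h | h <;> rw [Sym2.eq_iff] at h <;>
        rcases h with ⟨rfl, rfl⟩ | ⟨rfl, rfl⟩ <;> simp_all

private lemma triSub_nbhd_a (hab : a ≠ b) (hbc : b ≠ c) (hac : a ≠ c) :
    (triSub a b c).neighborSet a = {b, c} := by
  ext w
  simp only [Subgraph.mem_neighborSet, triSub_adj_iff, Set.mem_insert_iff,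
    Set.mem_singleton_iff, Sym2.eq_iff]
  constructor
  · rintro ⟨hne, h⟩
    tauto
  · rintro (rfl | rfl)
    · exact ⟨hab, by tauto⟩
    · exact ⟨hac, by tauto⟩

private lemma triSub_cycle3 (hab : a ≠ b) (hbc : b ≠ c) (hac : a ≠ c) :
    IsCycleSub (triSub a b c) 3 := by
  refine ⟨?_, ?_, ?_⟩
  · haveI hne : Nonempty ↥(triSub a b c).verts := ⟨⟨a, by simp [triSub_verts]⟩⟩
    refine ⟨fun u v => ?_⟩
    rcases eq_or_ne u v with rfl | huv
    · exact Reachable.refl _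
    · refine Adj.reachable ?_
      have hu : (↑u : V) ∈ ({a, b, c} : Set V) := u.2
      have hv : (↑v : V) ∈ ({a, b, c} : Set V) := v.2
      exact triSub_adj_of_mem hab hbc hac hu hv (fun h => huv (Subtype.ext h))
  · intro v hv
    rcases hv with rfl | rfl | rfl
    · rw [triSub_nbhd_a hab hbc hac, Set.ncard_pair hbc]
    · rw [triSub_rot, triSub_nbhd_a hbc hac.symm hab.symm, Set.ncard_pair hac.symm]
    · rw [triSub_rot, triSub_rot, triSub_nbhd_a hac.symm hab hbc.symm, Set.ncard_pair hab]
  · rw [triSub_edgeSet hab hbc hac]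
    have h1 : s(a, b) ∉ ({s(b, c), s(a, c)} : Set (Sym2 V)) := by
      simp only [Set.mem_insert_iff, Set.mem_singleton_iff, Sym2.eq_iff]; tauto
    have h2 : s(b, c) ∉ ({s(a, c)} : Set (Sym2 V)) := by
      simp only [Set.mem_singleton_iff, Sym2.eq_iff]; tauto
    rw [Set.ncard_insert_of_notMem h1, Set.ncard_insert_of_notMem h2, Set.ncard_singleton]

end Tri


/-- `n` odd, many triangles, no Hamilton cycles. -/
theorem odd_no_ham_many_threes (n : ℕ) (hodd : Odd n)
    (hind : ∀ M' : List ℕ, Admissible (n - 1) M' → KDecomp (n - 1) M')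
    (M : List ℕ)
    (hanc : AncestorList n (M ++ List.replicate ((n - 1) / 2) 3))
    (hno : M.count n = 0) :
    KDecomp n (M ++ List.replicate ((n - 1) / 2) 3) := by
  classical
  obtain ⟨c, rfl⟩ := hodd
  have hk : (2 * c + 1 - 1) / 2 = c := by omega
  rw [hk] at hanc ⊢
  have hmemA := hanc.1.1
  have hsumA := hanc.1.2
  rw [hk] at hsumA
  by_cases hc0 : c = 0
  · -- n = 1
    subst hc0
    have hM : M = [] := by
      rw [List.eq_nil_iff_forall_not_mem]
      intro m hm
      have h3 := hmemA m (List.mem_append_left _ hm)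
      omega
    subst hM
    refine Or.inl ⟨⟨0, rfl⟩, fun _ => ⊥, fun i => absurd i.isLt (by simp),
      fun i j _ => absurd i.isLt (by simp), ?_⟩
    ext e
    induction e using Sym2.ind with
    | _ x y =>
      simp only [Set.mem_iUnion, mem_edgeSet, top_adj]
      constructor
      · rintro ⟨i, -⟩; exact absurd i.isLt (by simp)
      · intro h
        exact absurd (Fin.ext (by omega : (x : ℕ) = (y : ℕ))) h
  · -- main case
    have hc1 : 1 ≤ c := by omega
    have hnotin : 2 * c + 1 ∉ M := List.count_eq_zero.mp hno
    have hsumM : M.sum + c * 3 = (2 * c + 1) * c := by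
      rw [List.sum_append, List.sum_replicate, smul_eq_mul] at hsumA
      omega
    have hadm : Admissible (2 * c + 1 - 1) M := by
      constructor
      · intro m hm
        have h3 := hmemA m (List.mem_append_left _ hm)
        have h4 : m ≠ 2 * c + 1 := fun h => hnotin (h ▸ hm)
        omega
      · rw [show (2 * c + 1 - 1) = 2 * c from rfl,
          show (2 * c - 1) / 2 = c - 1 from by omega]
        have hgoal : 2 * c * (c - 1) + c * 3 = (2 * c + 1) * c := by
          rcases c with _ | m
          · rfl
          · simp only [Nat.succ_sub_one]; ring
        exact Nat.add_right_cancel (hsumM.trans hgoal.symm)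
    obtain hdec := hind M hadm
    rw [show (2 * c + 1 - 1) = 2 * c from rfl] at hdec
    rcases hdec with ⟨⟨t, ht⟩, -⟩ | ⟨-, f, I, hI, hcyc, hdisj, hdisjI, hcover⟩
    · omega
    -- set up the embedding
    obtain ⟨φh, hφval⟩ : ∃ φh : (⊤ : SimpleGraph (Fin (2 * c))) →g
        (⊤ : SimpleGraph (Fin (2 * c + 1))), ∀ v, ((φh v : Fin (2 * c + 1)) : ℕ) = (v : ℕ) := by
      refine ⟨⟨Fin.castLE (by omega), ?_⟩, fun v => rfl⟩
      intro x y h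
      simp only [top_adj] at h ⊢
      exact fun hc => h (Fin.castLE_injective _ hc)
    have hφinj : Function.Injective φh := by
      intro x y h
      have := congrArg Fin.val h
      rw [hφval, hφval] at this
      exact Fin.ext this
    obtain ⟨z, hzval⟩ : ∃ z : Fin (2 * c + 1), (z : ℕ) = 2 * c := ⟨⟨2 * c, by omega⟩, rfl⟩
    have hφz : ∀ v, φh v ≠ z := by
      intro v h
      have h2 := congrArg Fin.val h
      rw [hφval, hzval] at h2
      have := v.isLt
      omega
    have hφne : ∀ v w : Fin (2 * c), v ≠ w → φh v ≠ φh w := fun v w h hcc => h (hφinj hcc)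
    have hψ : ∀ x : Fin (2 * c + 1), x ≠ z → ∃ v, φh v = x := by
      intro x hx
      have h1 := x.isLt
      have h2 : (x : ℕ) ≠ 2 * c := by
        intro h
        exact hx (Fin.ext (by rw [h, hzval]))
      exact ⟨⟨(x : ℕ), by omega⟩, Fin.ext (by rw [hφval])⟩
    -- uniqueness of matching partner
    have huniq : ∀ {v w w' : Fin (2 * c)}, I.Adj v w → I.Adj v w' → w = w' := by
      intro v w w' h1 h2
      obtain ⟨w0, -, hw0⟩ := hI.1 (I.edge_vert h1)
      rw [hw0 w h1, hw0 w' h2]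
    -- enumerate the matching edges
    have hcard : I.edgeSet.ncard = c := by
      have := pm_card hI
      omega
    obtain ⟨pa, pb, hpadj, hpsurj, hpshare⟩ :
        ∃ pa pb : Fin c → Fin (2 * c),
          (∀ j, I.Adj (pa j) (pb j)) ∧
          (∀ v w, I.Adj v w → ∃ j, s(pa j, pb j) = s(v, w)) ∧
          (∀ j j' (v : Fin (2 * c)), (v = pa j ∨ v = pb j) → (v = pa j' ∨ v = pb j') → j = j') := by
      haveI : Finite ↥I.edgeSet := (Set.toFinite I.edgeSet).to_subtype
      have hnat : Nat.card ↥I.edgeSet = c := by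
        rw [Nat.card_coe_set_eq]; exact hcard
      set e := Finite.equivFinOfCardEq hnat with he
      set pa : Fin c → Fin (2 * c) := fun j => ((e.symm j : Sym2 (Fin (2 * c)))).out.1 with hpa
      set pb : Fin c → Fin (2 * c) := fun j => ((e.symm j : Sym2 (Fin (2 * c)))).out.2 with hpb
      have hpe : ∀ j, s(pa j, pb j) = (e.symm j : Sym2 (Fin (2 * c))) :=
        fun j => sym2_mk_out _
      have hpadj : ∀ j, I.Adj (pa j) (pb j) := by
        intro j
        have h2 := (e.symm j).2
        rw [← hpe j] at h2
        exact Subgraph.mem_edgeSet.mp h2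
      refine ⟨pa, pb, hpadj, ?_, ?_⟩
      · intro v w hvw
        refine ⟨e ⟨s(v, w), Subgraph.mem_edgeSet.mpr hvw⟩, ?_⟩
        rw [hpe, Equiv.symm_apply_apply]
      · intro j j' v h1 h2
        have hEeq : s(pa j, pb j) = s(pa j', pb j') → j = j' := by
          intro h
          have : e.symm j = e.symm j' := Subtype.ext (by rw [← hpe j, ← hpe j', h])
          exact e.symm.injective this
        rcases h1 with rfl | rfl <;> rcases h2 with h2 | h2
        · apply hEeq
          rw [h2, huniq (hpadj j) (h2 ▸ hpadj j')]
        · apply hEeq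
          have hadj' : I.Adj (pa j) (pa j') := h2 ▸ (hpadj j').symm
          rw [huniq (hpadj j) hadj', h2, Sym2.eq_swap]
        · have hadj'' : I.Adj (pb j) (pb j') := by rw [h2]; exact hpadj j'
          apply hEeq
          rw [show pa j = pb j' from huniq (hpadj j).symm hadj'', h2, Sym2.eq_swap]
        · have hadj'' : I.Adj (pb j) (pa j') := by rw [h2]; exact (hpadj j').symm
          apply hEeq
          rw [show pa j = pa j' from huniq (hpadj j).symm hadj'', h2]
    have hpab : ∀ j, pa j ≠ pb j := fun j => (I.adj_sub (hpadj j)).ne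
    have hzmem : ∀ v : Fin (2 * c), ∃ j, v = pa j ∨ v = pb j := by
      intro v
      obtain ⟨w, hw, -⟩ := hI.1 (hI.2 v)
      obtain ⟨j, hj⟩ := hpsurj v w hw
      rw [Sym2.eq_iff] at hj
      rcases hj with ⟨h1, -⟩ | ⟨-, h2⟩
      · exact ⟨j, Or.inl h1.symm⟩
      · exact ⟨j, Or.inr h2.symm⟩
    have hlen : (M ++ List.replicate c 3).length = M.length + c := by simp
    have hedgemap : ∀ i0 : Fin M.length,
        ((f i0).map φh).edgeSet = Sym2.map φh '' (f i0).edgeSet :=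
      fun i0 => edgeSet_map' φh (f i0)
    have hcyc_notz : ∀ (i0 : Fin M.length) (x : Fin (2 * c + 1)),
        s(x, z) ∉ ((f i0).map φh).edgeSet := by
      intro i0 x hmem
      rw [hedgemap] at hmem
      obtain ⟨e', he', hm⟩ := hmem
      obtain ⟨u, w, rfl⟩ : ∃ u w, e' = s(u, w) := ⟨e'.out.1, e'.out.2, (sym2_mk_out e').symm⟩
      rw [Sym2.map_pair_eq, Sym2.eq_iff] at hm
      rcases hm with ⟨-, h2⟩ | ⟨h2, -⟩ <;> exact hφz _ h2
    have hcyc_notI : ∀ (i0 : Fin M.length) (u w : Fin (2 * c)), I.Adj u w →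
        s(φh u, φh w) ∉ ((f i0).map φh).edgeSet := by
      intro i0 u w huw hmem
      rw [hedgemap] at hmem
      obtain ⟨e', he', hm⟩ := hmem
      obtain ⟨u', w', rfl⟩ : ∃ a b2, e' = s(a, b2) := ⟨e'.out.1, e'.out.2, (sym2_mk_out e').symm⟩
      rw [Sym2.map_pair_eq, Sym2.eq_iff] at hm
      have he'' : s(u, w) ∈ (f i0).edgeSet := by
        rcases hm with ⟨h1, h2⟩ | ⟨h1, h2⟩
        · rwa [hφinj h1, hφinj h2] at he'
        · rw [hφinj h1, hφinj h2] at he'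
          rwa [Sym2.eq_swap]
      exact Set.disjoint_left.mp (hdisjI i0) he'' (Subgraph.mem_edgeSet.mpr huw)
    have htc : ∀ (i0 : Fin M.length) (j0 : Fin c),
        Disjoint ((f i0).map φh).edgeSet (triSub (φh (pa j0)) (φh (pb j0)) z).edgeSet := by
      intro i0 j0
      rw [Set.disjoint_right]
      intro e he
      rw [triSub_edgeSet (hφne _ _ (hpab j0)) (hφz _) (hφz _)] at he
      simp only [Set.mem_insert_iff, Set.mem_singleton_iff] at he
      rcases he with rfl | rfl | rfl
      · exact hcyc_notI i0 _ _ (hpadj j0)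
      · exact hcyc_notz i0 _
      · exact hcyc_notz i0 _
    have hint : ∀ j j' : Fin c, j ≠ j' → ∀ t : Fin (2 * c + 1),
        t ∈ ({φh (pa j), φh (pb j), z} : Set (Fin (2 * c + 1))) →
        t ∈ ({φh (pa j'), φh (pb j'), z} : Set (Fin (2 * c + 1))) → t = z := by
      intro j j' hjj t h1 h2
      simp only [Set.mem_insert_iff, Set.mem_singleton_iff] at h1 h2
      rcases h1 with rfl | rfl | rfl
      · rcases h2 with h | h | h
        · exact absurd (hpshare j j' _ (Or.inl rfl) (Or.inl (hφinj h))) hjj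
        · exact absurd (hpshare j j' _ (Or.inl rfl) (Or.inr (hφinj h))) hjj
        · exact h
      · rcases h2 with h | h | h
        · exact absurd (hpshare j j' _ (Or.inr rfl) (Or.inl (hφinj h))) hjj
        · exact absurd (hpshare j j' _ (Or.inr rfl) (Or.inr (hφinj h))) hjj
        · exact h
      · rfl
    have httri : ∀ j j' : Fin c, j ≠ j' →
        Disjoint (triSub (φh (pa j)) (φh (pb j)) z).edgeSet
          (triSub (φh (pa j')) (φh (pb j')) z).edgeSet := by
      intro j j' hjj
      rw [Set.disjoint_left]
      intro e h1 h2
      obtain ⟨x, y, rfl⟩ : ∃ x y, e = s(x, y) := ⟨e.out.1, e.out.2, (sym2_mk_out e).symm⟩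
      have hA := Subgraph.mem_edgeSet.mp h1
      have hB := Subgraph.mem_edgeSet.mp h2
      have hxy : x ≠ y := hA.1
      have hx := hint j j' hjj x ((triSub _ _ _).edge_vert hA) ((triSub _ _ _).edge_vert hB)
      have hy := hint j j' hjj y ((triSub _ _ _).edge_vert ((triSub _ _ _).adj_symm hA))
        ((triSub _ _ _).edge_vert ((triSub _ _ _).adj_symm hB))
      exact hxy (hx.trans hy.symm)
    have htmem : ∀ (j : Fin c) (v : Fin (2 * c)), (v = pa j ∨ v = pb j) →
        s(φh v, z) ∈ (triSub (φh (pa j)) (φh (pb j)) z).edgeSet := by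
      intro j v hv
      rw [triSub_edgeSet (hφne _ _ (hpab j)) (hφz _) (hφz _)]
      simp only [Set.mem_insert_iff, Set.mem_singleton_iff]
      rcases hv with rfl | rfl
      · exact Or.inr (Or.inr rfl)
      · exact Or.inr (Or.inl rfl)
    refine Or.inl ⟨⟨c, rfl⟩, fun i =>
      if h : (i : ℕ) < M.length then (f ⟨(i : ℕ), h⟩).map φh
      else triSub (φh (pa ⟨(i : ℕ) - M.length, by have h1 := i.isLt; omega⟩))
        (φh (pb ⟨(i : ℕ) - M.length, by have h1 := i.isLt; omega⟩)) z,
      ?_, ?_, ?_⟩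
    · intro i
      dsimp only
      by_cases h : (i : ℕ) < M.length
      · rw [dif_pos h]
        have hget : (M ++ List.replicate c 3).get i = M.get ⟨(i : ℕ), h⟩ := by
          rw [List.get_eq_getElem, List.get_eq_getElem, List.getElem_append_left]
        rw [hget]
        exact isCycleSub_map φh hφinj (hcyc ⟨(i : ℕ), h⟩)
      · rw [dif_neg h]
        have hget : (M ++ List.replicate c 3).get i = 3 := by
          rw [List.get_eq_getElem, List.getElem_append_right (le_of_not_gt h),
            List.getElem_replicate]
        rw [hget]
        exact triSub_cycle3 (hφne _ _ (hpab _)) (hφz _) (hφz _)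
    · intro i j hij
      have hvij : (i : ℕ) ≠ (j : ℕ) := fun h => hij (Fin.ext h)
      dsimp only
      by_cases h1 : (i : ℕ) < M.length <;> by_cases h2 : (j : ℕ) < M.length
      · rw [dif_pos h1, dif_pos h2, hedgemap, hedgemap]
        refine Set.disjoint_image_of_injective (Sym2.map.injective hφinj) (hdisj _ _ ?_)
        intro hc2
        exact hvij (by simpa using congrArg Fin.val hc2)
      · rw [dif_pos h1, dif_neg h2]
        exact htc _ _
      · rw [dif_neg h1, dif_pos h2]
        exact (htc _ _).symm
      · rw [dif_neg h1, dif_neg h2]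
        refine httri _ _ ?_
        intro hc2
        have h3 : (i : ℕ) - M.length = (j : ℕ) - M.length := by
          simpa using congrArg Fin.val hc2
        have h4 := i.isLt
        have h5 := j.isLt
        omega
    · apply Set.Subset.antisymm
      · intro e he
        simp only [Set.mem_iUnion] at he
        obtain ⟨i, hi⟩ := he
        by_cases h : (i : ℕ) < M.length
        · rw [dif_pos h] at hi
          exact Subgraph.edgeSet_subset _ hi
        · rw [dif_neg h] at hi
          exact Subgraph.edgeSet_subset _ hi
      · intro e he
        obtain ⟨x, y, rfl⟩ : ∃ x y, e = s(x, y) := ⟨e.out.1, e.out.2, (sym2_mk_out e).symm⟩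
        have hxy : x ≠ y := by simpa using he
        rw [Set.mem_iUnion]
        rcases eq_or_ne x z with rfl | hxz
        · obtain ⟨v, rfl⟩ := hψ y hxy.symm
          obtain ⟨j, hvj⟩ := hzmem v
          refine ⟨⟨M.length + (j : ℕ), by omega⟩, ?_⟩
          dsimp only
          rw [dif_neg (by omega : ¬ (M.length + (j : ℕ) < M.length))]
          simp only [Nat.add_sub_cancel_left, Fin.eta]
          rw [Sym2.eq_swap]
          exact htmem j v hvj
        · rcases eq_or_ne y z with rfl | hyz
          · obtain ⟨v, rfl⟩ := hψ x hxz
            obtain ⟨j, hvj⟩ := hzmem v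
            refine ⟨⟨M.length + (j : ℕ), by omega⟩, ?_⟩
            dsimp only
            rw [dif_neg (by omega : ¬ (M.length + (j : ℕ) < M.length))]
            simp only [Nat.add_sub_cancel_left, Fin.eta]
            exact htmem j v hvj
          · obtain ⟨x', rfl⟩ := hψ x hxz
            obtain ⟨y', rfl⟩ := hψ y hyz
            have hxy' : x' ≠ y' := fun h => hxy (by rw [h])
            have hmem2 : s(x', y') ∈ (⊤ : SimpleGraph (Fin (2 * c))).edgeSet := by
              simpa using hxy'
            rw [← hcover] at hmem2
            rcases hmem2 with hcy | hIe
            · rw [Set.mem_iUnion] at hcy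
              obtain ⟨i0, hi0⟩ := hcy
              refine ⟨⟨(i0 : ℕ), by omega⟩, ?_⟩
              dsimp only
              rw [dif_pos (show ((i0 : ℕ)) < M.length from i0.isLt)]
              simp only [Fin.eta]
              rw [hedgemap]
              exact ⟨s(x', y'), hi0, by rw [Sym2.map_pair_eq]⟩
            · obtain ⟨j, hj⟩ := hpsurj x' y' (Subgraph.mem_edgeSet.mp hIe)
              refine ⟨⟨M.length + (j : ℕ), by omega⟩, ?_⟩
              dsimp only
              rw [dif_neg (by omega : ¬ (M.length + (j : ℕ) < M.length))]
              simp only [Nat.add_sub_cancel_left, Fin.eta]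
              rw [triSub_edgeSet (hφne _ _ (hpab j)) (hφz _) (hφz _)]
              simp only [Set.mem_insert_iff, Set.mem_singleton_iff]
              left
              rw [show s(φh (pa j), φh (pb j)) = Sym2.map φh s(pa j, pb j) from
                (Sym2.map_pair_eq _ _ _).symm, hj, Sym2.map_pair_eq]
end

section
/- Let n be even, suppose that for every (n−2)-admissible list M′ there is an (M′)-decomposition of K_{n−2}, and suppose that the list (M, 4^{(n−2)/2}) obtained from M by adjoining (n−2)/2 occurrences of 4 is an n-ancestor list with ν_n(M) = 0. Then there is an (M, 4^{(n−2)/2})-decomposition of K_n. -/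
open SimpleGraph

namespace Sc
variable {A B : Type*}

def topHom (j : A → B) (hj : Function.Injective j) :
    (⊤ : SimpleGraph A) →g (⊤ : SimpleGraph B) :=
  ⟨j, fun h => by simpa using hj.ne (by simpa using h)⟩

@[simp] lemma topHom_apply (j : A → B) (hj : Function.Injective j) (a : A) :
    topHom j hj a = j a := rfl

lemma edgeSet_map' {V W : Type*} {G : SimpleGraph V} {G' : SimpleGraph W} (f : G →g G')
    (H : G.Subgraph) : (H.map f).edgeSet = Sym2.map f '' H.edgeSet := by
  ext e
  induction e with
  | _ x y =>
    simp only [Subgraph.mem_edgeSet, Subgraph.map_adj, Relation.Map, Set.mem_image]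
    constructor
    · rintro ⟨a, b, h, rfl, rfl⟩
      exact ⟨s(a,b), h, rfl⟩
    · rintro ⟨e, he, hmap⟩
      induction e with
      | _ a b =>
        rw [Sym2.map_pair_eq, Sym2.eq_iff] at hmap
        rcases hmap with ⟨rfl, rfl⟩ | ⟨rfl, rfl⟩
        · exact ⟨a, b, he, rfl, rfl⟩
        · exact ⟨b, a, he.symm, rfl, rfl⟩

variable {j : A → B} (hj : Function.Injective j)

lemma map_adj_iff (H : (⊤ : SimpleGraph A).Subgraph) (x y : A) :
    (H.map (topHom j hj)).Adj (j x) (j y) ↔ H.Adj x y := by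
  simp only [Subgraph.map_adj, Relation.Map, topHom_apply]
  constructor
  · rintro ⟨a, b, h, ha, hb⟩
    rwa [hj ha, hj hb] at h
  · exact fun h => ⟨x, y, h, rfl, rfl⟩

lemma isCycleSub_map (H : (⊤ : SimpleGraph A).Subgraph) {m : ℕ}
    (h : IsCycleSub H m) : IsCycleSub (H.map (topHom j hj)) m := by
  obtain ⟨hc, hdeg, hcard⟩ := h
  have hverts : (H.map (topHom j hj)).verts = j '' H.verts := rfl
  -- iso between coe graphs
  let e : H.verts ≃ ((H.map (topHom j hj)).verts : Set B) :=
    Equiv.Set.image j H.verts hj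
  have eiso : H.coe ≃g (H.map (topHom j hj)).coe := by
    refine ⟨e, ?_⟩
    rintro ⟨a, ha⟩ ⟨b, hb⟩
    simp only [e, Equiv.Set.image, Equiv.Set.imageOfInjOn, Subgraph.coe_adj, Equiv.coe_fn_mk]
    exact map_adj_iff hj H a b
  refine ⟨(Iso.connected_iff eiso).mp hc, ?_, ?_⟩
  · rintro w hw
    rw [hverts] at hw
    obtain ⟨v, hv, rfl⟩ := hw
    have hns : (H.map (topHom j hj)).neighborSet (j v) = j '' H.neighborSet v := by
      ext w
      simp only [Subgraph.mem_neighborSet, Subgraph.map_adj, Relation.Map, topHom_apply,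
        Set.mem_image]
      constructor
      · rintro ⟨a, b, h, ha, rfl⟩
        exact ⟨b, by rwa [hj ha] at h, rfl⟩
      · rintro ⟨b, hb, rfl⟩
        exact ⟨v, b, hb, rfl, rfl⟩
    rw [hns, Set.ncard_image_of_injective _ hj]
    exact hdeg v hv
  · have hco : ⇑(topHom j hj) = j := rfl
    rw [edgeSet_map', hco, Set.ncard_image_of_injective _ (Sym2.map.injective hj)]
    exact hcard


variable {V : Type*}

def cyc4 (u a v b : V) (hd : u ≠ a ∧ u ≠ v ∧ u ≠ b ∧ a ≠ v ∧ a ≠ b ∧ v ≠ b) :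
    (⊤ : SimpleGraph V).Subgraph where
  verts := {u, a, v, b}
  Adj x y := (x = u ∧ y = a) ∨ (x = a ∧ y = u) ∨ (x = a ∧ y = v) ∨ (x = v ∧ y = a) ∨
             (x = v ∧ y = b) ∨ (x = b ∧ y = v) ∨ (x = b ∧ y = u) ∨ (x = u ∧ y = b)
  adj_sub := by
    rintro x y (⟨rfl,rfl⟩|⟨rfl,rfl⟩|⟨rfl,rfl⟩|⟨rfl,rfl⟩|⟨rfl,rfl⟩|⟨rfl,rfl⟩|⟨rfl,rfl⟩|⟨rfl,rfl⟩) <;>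
      simp only [top_adj] <;> tauto
  edge_vert := by
    rintro x y (⟨rfl,rfl⟩|⟨rfl,rfl⟩|⟨rfl,rfl⟩|⟨rfl,rfl⟩|⟨rfl,rfl⟩|⟨rfl,rfl⟩|⟨rfl,rfl⟩|⟨rfl,rfl⟩) <;>
      simp [Set.mem_insert_iff]
  symm := ⟨fun x y h => by tauto⟩

variable (u a v b : V) (hd : u ≠ a ∧ u ≠ v ∧ u ≠ b ∧ a ≠ v ∧ a ≠ b ∧ v ≠ b)

lemma cyc4_adj (x y : V) : (cyc4 u a v b hd).Adj x y ↔
    ((x = u ∧ y = a) ∨ (x = a ∧ y = u) ∨ (x = a ∧ y = v) ∨ (x = v ∧ y = a) ∨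
     (x = v ∧ y = b) ∨ (x = b ∧ y = v) ∨ (x = b ∧ y = u) ∨ (x = u ∧ y = b)) := Iff.rfl

lemma cyc4_verts : (cyc4 u a v b hd).verts = {u, a, v, b} := rfl

lemma cyc4_edgeSet : (cyc4 u a v b hd).edgeSet = {s(u,a), s(a,v), s(v,b), s(b,u)} := by
  ext e
  induction e with
  | _ x y =>
    simp only [Subgraph.mem_edgeSet, cyc4_adj, Set.mem_insert_iff, Set.mem_singleton_iff]
    constructor
    · rintro (⟨rfl,rfl⟩|⟨rfl,rfl⟩|⟨rfl,rfl⟩|⟨rfl,rfl⟩|⟨rfl,rfl⟩|⟨rfl,rfl⟩|⟨rfl,rfl⟩|⟨rfl,rfl⟩)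
      · exact Or.inl rfl
      · exact Or.inl (Sym2.eq_swap)
      · exact Or.inr (Or.inl rfl)
      · exact Or.inr (Or.inl (Sym2.eq_swap))
      · exact Or.inr (Or.inr (Or.inl rfl))
      · exact Or.inr (Or.inr (Or.inl (Sym2.eq_swap)))
      · exact Or.inr (Or.inr (Or.inr rfl))
      · exact Or.inr (Or.inr (Or.inr Sym2.eq_swap))
    · rintro (h | h | h | h) <;> rw [Sym2.eq_iff] at h <;> tauto

lemma cyc4_neighborSet_u : (cyc4 u a v b hd).neighborSet u = {a, b} := by
  obtain ⟨h1, h2, h3, h4, h5, h6⟩ := id hd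
  ext y
  simp only [Subgraph.mem_neighborSet, cyc4_adj, Set.mem_insert_iff, Set.mem_singleton_iff]
  constructor
  · rintro (⟨_,rfl⟩|⟨h,_⟩|⟨h,_⟩|⟨h,_⟩|⟨h,_⟩|⟨h,_⟩|⟨h,_⟩|⟨_,rfl⟩) <;> tauto
  · rintro (rfl | rfl) <;> tauto

lemma cyc4_neighborSet_a : (cyc4 u a v b hd).neighborSet a = {u, v} := by
  obtain ⟨h1, h2, h3, h4, h5, h6⟩ := id hd
  ext y
  simp only [Subgraph.mem_neighborSet, cyc4_adj, Set.mem_insert_iff, Set.mem_singleton_iff]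
  constructor
  · rintro (⟨h,_⟩|⟨_,rfl⟩|⟨_,rfl⟩|⟨h,_⟩|⟨h,_⟩|⟨h,_⟩|⟨h,_⟩|⟨h,_⟩) <;> tauto
  · rintro (rfl | rfl) <;> tauto

lemma cyc4_neighborSet_v : (cyc4 u a v b hd).neighborSet v = {a, b} := by
  obtain ⟨h1, h2, h3, h4, h5, h6⟩ := id hd
  ext y
  simp only [Subgraph.mem_neighborSet, cyc4_adj, Set.mem_insert_iff, Set.mem_singleton_iff]
  constructor
  · rintro (⟨h,_⟩|⟨h,_⟩|⟨h,_⟩|⟨_,rfl⟩|⟨_,rfl⟩|⟨h,_⟩|⟨h,_⟩|⟨h,_⟩) <;> tauto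
  · rintro (rfl | rfl) <;> tauto

lemma cyc4_neighborSet_b : (cyc4 u a v b hd).neighborSet b = {v, u} := by
  obtain ⟨h1, h2, h3, h4, h5, h6⟩ := id hd
  ext y
  simp only [Subgraph.mem_neighborSet, cyc4_adj, Set.mem_insert_iff, Set.mem_singleton_iff]
  constructor
  · rintro (⟨h,_⟩|⟨h,_⟩|⟨h,_⟩|⟨h,_⟩|⟨h,_⟩|⟨_,rfl⟩|⟨_,rfl⟩|⟨h,_⟩) <;> tauto
  · rintro (rfl | rfl) <;> tauto

set_option maxHeartbeats 1000000 in
lemma cyc4_isCycleSub : IsCycleSub (cyc4 u a v b hd) 4 := by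
  obtain ⟨h1, h2, h3, h4, h5, h6⟩ := id hd
  have hu : u ∈ (cyc4 u a v b hd).verts := by rw [cyc4_verts]; simp
  have ha : a ∈ (cyc4 u a v b hd).verts := by rw [cyc4_verts]; simp
  have hv : v ∈ (cyc4 u a v b hd).verts := by rw [cyc4_verts]; simp
  have hb : b ∈ (cyc4 u a v b hd).verts := by rw [cyc4_verts]; simp
  refine ⟨?_, ?_, ?_⟩
  · rw [SimpleGraph.connected_iff]
    refine ⟨?_, ⟨⟨u, hu⟩⟩⟩
    · intro x y
      have key : ∀ z : (cyc4 u a v b hd).verts,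
          (cyc4 u a v b hd).coe.Reachable ⟨u, hu⟩ z := by
        rintro ⟨z, hz⟩
        have hua : (cyc4 u a v b hd).coe.Adj ⟨u, hu⟩ ⟨a, ha⟩ := by
          rw [Subgraph.coe_adj, cyc4_adj]; tauto
        have hub : (cyc4 u a v b hd).coe.Adj ⟨u, hu⟩ ⟨b, hb⟩ := by
          rw [Subgraph.coe_adj, cyc4_adj]; tauto
        have hav : (cyc4 u a v b hd).coe.Adj ⟨a, ha⟩ ⟨v, hv⟩ := by
          rw [Subgraph.coe_adj, cyc4_adj]; tauto
        rw [cyc4_verts, Set.mem_insert_iff, Set.mem_insert_iff, Set.mem_insert_iff,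
          Set.mem_singleton_iff] at hz
        rcases hz with rfl | rfl | rfl | rfl
        · rfl
        · exact hua.reachable
        · exact hua.reachable.trans hav.reachable
        · exact hub.reachable
      exact (key x).symm.trans (key y)
  · intro z hz
    rw [cyc4_verts, Set.mem_insert_iff, Set.mem_insert_iff, Set.mem_insert_iff,
      Set.mem_singleton_iff] at hz
    rcases hz with rfl | rfl | rfl | rfl
    · rw [cyc4_neighborSet_u]; exact Set.ncard_pair h5
    · rw [cyc4_neighborSet_a]; exact Set.ncard_pair h2
    · rw [cyc4_neighborSet_v]; exact Set.ncard_pair h5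
    · rw [cyc4_neighborSet_b]; exact Set.ncard_pair h2.symm
  · rw [cyc4_edgeSet]
    have e1 : s(u,a) ∉ ({s(a,v), s(v,b), s(b,u)} : Set (Sym2 V)) := by
      simp only [Set.mem_insert_iff, Set.mem_singleton_iff, Sym2.eq_iff]; tauto
    have e2 : s(a,v) ∉ ({s(v,b), s(b,u)} : Set (Sym2 V)) := by
      simp only [Set.mem_insert_iff, Set.mem_singleton_iff, Sym2.eq_iff]; tauto
    have e3 : s(v,b) ∉ ({s(b,u)} : Set (Sym2 V)) := by
      simp only [Set.mem_singleton_iff, Sym2.eq_iff]; tauto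
    rw [Set.ncard_insert_of_notMem e1 (Set.Finite.insert _ (Set.Finite.insert _
      (Set.finite_singleton _))),
      Set.ncard_insert_of_notMem e2 (Set.Finite.insert _ (Set.finite_singleton _)),
      Set.ncard_insert_of_notMem e3 (Set.finite_singleton _), Set.ncard_singleton]


lemma cyc4_edge_mem {e : Sym2 V} (he : e ∈ (cyc4 u a v b hd).edgeSet) : u ∈ e ∨ v ∈ e := by
  rw [cyc4_edgeSet] at he
  simp only [Set.mem_insert_iff, Set.mem_singleton_iff] at he
  rcases he with rfl | rfl | rfl | rfl <;> simp [Sym2.mem_iff]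

lemma cyc4_not_mem_uv : s(u, v) ∉ (cyc4 u a v b hd).edgeSet := by
  obtain ⟨h1, h2, h3, h4, h5, h6⟩ := id hd
  rw [cyc4_edgeSet]
  simp only [Set.mem_insert_iff, Set.mem_singleton_iff, Sym2.eq_iff]
  tauto

lemma cyc4_edgeSet_disjoint {a' b' : V}
    (hd' : u ≠ a' ∧ u ≠ v ∧ u ≠ b' ∧ a' ≠ v ∧ a' ≠ b' ∧ v ≠ b')
    (g1 : a ≠ a') (g2 : a ≠ b') (g3 : b ≠ a') (g4 : b ≠ b') :
    Disjoint (cyc4 u a v b hd).edgeSet (cyc4 u a' v b' hd').edgeSet := by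
  obtain ⟨h1, h2, h3, h4, h5, h6⟩ := id hd
  obtain ⟨h1', h2', h3', h4', h5', h6'⟩ := id hd'
  rw [Set.disjoint_left, cyc4_edgeSet, cyc4_edgeSet]
  intro e he1 he2
  simp only [Set.mem_insert_iff, Set.mem_singleton_iff] at he1
  rcases he1 with rfl | rfl | rfl | rfl <;>
    simp only [Set.mem_insert_iff, Set.mem_singleton_iff, Sym2.eq_iff] at he2 <;> tauto

set_option maxHeartbeats 2000000 in
lemma extend {n m q : ℕ} (hm2 : m + 2 = n) (hq2 : 2 * q = m)
    (M : List ℕ) (hdec : CycleDecompM (⊤ : SimpleGraph (Fin m)) M) :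
    CycleDecompM (⊤ : SimpleGraph (Fin n)) (M ++ List.replicate q 4) := by
  classical
  obtain ⟨f0, I0, hI0pm, hcyc0, hdisj0, hdisjI0, hcov0⟩ := hdec
  have hmn : m ≤ n := by omega
  set j : Fin m → Fin n := Fin.castLE hmn with hjdef
  have hj : Function.Injective j := Fin.castLE_injective hmn
  have hjval : ∀ x : Fin m, (j x).1 = x.1 := fun x => rfl
  set φ := Sc.topHom j hj with hφ
  set u : Fin n := ⟨m, by omega⟩ with hu
  set v : Fin n := ⟨m + 1, by omega⟩ with hv
  set ak : Fin q → Fin n := fun k => ⟨2 * k.1, by have := k.2; omega⟩ with hak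
  set bk : Fin q → Fin n := fun k => ⟨2 * k.1 + 1, by have := k.2; omega⟩ with hbk
  have hd : ∀ k : Fin q, u ≠ ak k ∧ u ≠ v ∧ u ≠ bk k ∧ ak k ≠ v ∧ ak k ≠ bk k ∧ v ≠ bk k := by
    intro k
    have := k.2
    refine ⟨?_, ?_, ?_, ?_, ?_, ?_⟩ <;> simp only [hu, hv, hak, hbk, ne_eq, Fin.mk.injEq] <;> omega
  set C : Fin q → (⊤ : SimpleGraph (Fin n)).Subgraph := fun k =>
    Sc.cyc4 u (ak k) v (bk k) (hd k) with hC
  have huv : (⊤ : SimpleGraph (Fin n)).Adj u v := by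
    simp only [top_adj, hu, hv, ne_eq, Fin.mk.injEq]; omega
  set J := (I0.map φ) ⊔ (⊤ : SimpleGraph (Fin n)).subgraphOfAdj huv with hJ
  -- basic range facts
  have hmapval : ∀ (H : (⊤ : SimpleGraph (Fin m)).Subgraph) (x y : Fin n),
      (H.map φ).Adj x y → x.1 < m ∧ y.1 < m := by
    rintro H x y ⟨a, b, _, rfl, rfl⟩
    exact ⟨a.2, b.2⟩
  have hCedge : ∀ k : Fin q, (C k).edgeSet =
      {s(u, ak k), s(ak k, v), s(v, bk k), s(bk k, u)} := fun k => Sc.cyc4_edgeSet _ _ _ _ _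
  have hJedge : J.edgeSet = (I0.map φ).edgeSet ∪ {s(u, v)} := by
    rw [hJ, Subgraph.edgeSet_sup, edgeSet_subgraphOfAdj]
  -- J is a perfect matching
  have humem2 : ∀ a : Fin m, φ a ≠ u ∧ φ a ≠ v := by
    intro a
    have ha2 := a.2
    refine ⟨fun h => ?_, fun h => ?_⟩
    · have h' : (a : ℕ) = m := congrArg Fin.val h
      omega
    · have h' : (a : ℕ) = m + 1 := congrArg Fin.val h
      omega
  have hmapmem : ∀ (H : (⊤ : SimpleGraph (Fin m)).Subgraph) (e : Sym2 (Fin n)),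
      e ∈ (H.map φ).edgeSet → u ∉ e ∧ v ∉ e := by
    intro H e he
    rw [Sc.edgeSet_map'] at he
    obtain ⟨e', he', hmap⟩ := he
    induction e' with
    | _ a b =>
      rw [Sym2.map_pair_eq] at hmap
      subst hmap
      refine ⟨fun hc => ?_, fun hc => ?_⟩ <;> rw [Sym2.mem_iff] at hc
      · rcases hc with h | h
        · exact (humem2 a).1 h.symm
        · exact (humem2 b).1 h.symm
      · rcases hc with h | h
        · exact (humem2 a).2 h.symm
        · exact (humem2 b).2 h.symm
  have hdisjmap : ∀ (H1 H2 : (⊤ : SimpleGraph (Fin m)).Subgraph),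
      Disjoint H1.edgeSet H2.edgeSet → Disjoint (H1.map φ).edgeSet (H2.map φ).edgeSet := by
    intro H1 H2 hdis
    rw [Sc.edgeSet_map', Sc.edgeSet_map', Set.disjoint_left]
    rintro e ⟨e1, he1, rfl⟩ ⟨e2, he2, heq⟩
    have he12 : e2 = e1 := Sym2.map.injective hj heq
    subst he12
    exact Set.disjoint_left.mp hdis he1 he2
  have hsubadj : ∀ x y : Fin n, ((⊤ : SimpleGraph (Fin n)).subgraphOfAdj huv).Adj x y ↔
      (x = u ∧ y = v) ∨ (x = v ∧ y = u) := by
    intro x y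
    rw [subgraphOfAdj_adj, Sym2.eq_iff]
    tauto
  have hJpm : J.IsPerfectMatching := by
    constructor
    · rintro x hx
      by_cases hxm : x.1 < m
      · obtain ⟨y', hy', huniq⟩ := hI0pm.1 (hI0pm.2 ⟨x.1, hxm⟩)
        have hjx : j ⟨x.1, hxm⟩ = x := rfl
        refine ⟨j y', Or.inl ⟨⟨x.1, hxm⟩, y', hy', rfl, rfl⟩, ?_⟩
        rintro y (⟨a, b, hab, ha, rfl⟩ | hy)
        · have ha' : a = ⟨x.1, hxm⟩ := hj ha
          subst ha'
          rw [huniq b hab]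
          rfl
        · rw [hsubadj] at hy
          rcases hy with ⟨rfl, rfl⟩ | ⟨rfl, rfl⟩
          · exact absurd hxm (by simp [hu])
          · exact absurd hxm (by simp [hv])
      · have hx2 : x = u ∨ x = v := by
          have := x.2
          rcases Nat.lt_or_ge x.1 (m + 1) with h | h
          · exact Or.inl (by simp [hu, Fin.ext_iff]; omega)
          · exact Or.inr (by simp [hv, Fin.ext_iff]; omega)
        have humem : ∀ a (b : Fin m), φ a ≠ u ∧ φ a ≠ v := by
          intro a b
          have ha2 := a.2
          refine ⟨fun h => ?_, fun h => ?_⟩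
          · have h' : (a : ℕ) = m := congrArg Fin.val h
            omega
          · have h' : (a : ℕ) = m + 1 := congrArg Fin.val h
            omega
        have huvne : u ≠ v := by simp [hu, hv, Fin.ext_iff]
        rcases hx2 with rfl | rfl
        · refine ⟨v, Or.inr ((hsubadj u v).mpr (Or.inl ⟨rfl, rfl⟩)), ?_⟩
          rintro y (⟨a, b, hab, ha, rfl⟩ | hy)
          · exact absurd ha (humem a b).1
          · rw [hsubadj] at hy
            rcases hy with ⟨_, rfl⟩ | ⟨huv', rfl⟩
            · rfl
            · exact absurd huv' huvne
        · refine ⟨u, Or.inr ((hsubadj v u).mpr (Or.inr ⟨rfl, rfl⟩)), ?_⟩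
          rintro y (⟨a, b, hab, ha, rfl⟩ | hy)
          · exact absurd ha (humem a b).2
          · rw [hsubadj] at hy
            rcases hy with ⟨huv', rfl⟩ | ⟨_, rfl⟩
            · exact absurd huv'.symm huvne
            · rfl
    · intro x
      rw [hJ, Subgraph.verts_sup, Set.mem_union]
      by_cases hxm : x.1 < m
      · exact Or.inl ⟨⟨x.1, hxm⟩, hI0pm.2 _, rfl⟩
      · right
        have := x.2
        rcases Nat.lt_or_ge x.1 (m + 1) with h | h
        · have : x = u := by simp [hu, Fin.ext_iff]; omega
          simp [this]
        · have : x = v := by simp [hv, Fin.ext_iff]; omega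
          simp [this]
  have hlen : (M ++ List.replicate q 4).length = M.length + q := by simp
  set F : Fin (M ++ List.replicate q 4).length → (⊤ : SimpleGraph (Fin n)).Subgraph := fun i =>
    if h : (i : ℕ) < M.length then (f0 ⟨i, h⟩).map φ
    else C ⟨(i : ℕ) - M.length, by
      have h2 : (i : ℕ) < M.length + q := lt_of_lt_of_le i.2 (le_of_eq hlen)
      omega⟩ with hF
  refine ⟨F, J, hJpm, ?_, ?_, ?_, ?_⟩
  · -- cycles
    intro i
    by_cases h : (i : ℕ) < M.length
    · have hget : (M ++ List.replicate q 4).get i = M.get ⟨i, h⟩ := by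
        simp only [List.get_eq_getElem]
        exact List.getElem_append_left h
      rw [hget]
      simp only [hF, dif_pos h]
      exact Sc.isCycleSub_map hj _ (hcyc0 ⟨i, h⟩)
    · have hget : (M ++ List.replicate q 4).get i = 4 := by
        have h2 : (i : ℕ) < M.length + q := lt_of_lt_of_le i.2 (le_of_eq hlen)
        simp only [List.get_eq_getElem]
        rw [List.getElem_append_right (by omega)]
        simp
      rw [hget]
      simp only [hF, dif_neg h]
      exact Sc.cyc4_isCycleSub _ _ _ _ _
  · -- pairwise disjoint
    intro i1 i2 hne
    have hvalne : (i1 : ℕ) ≠ (i2 : ℕ) := fun h => hne (Fin.ext h)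
    by_cases h1 : (i1 : ℕ) < M.length <;> by_cases h2 : (i2 : ℕ) < M.length
    · simp only [hF, dif_pos h1, dif_pos h2]
      exact hdisjmap _ _ (hdisj0 ⟨i1, h1⟩ ⟨i2, h2⟩ (by simp [Fin.ext_iff]; omega))
    · simp only [hF, dif_pos h1, dif_neg h2]
      rw [Set.disjoint_left]
      intro e he1 he2
      have hm1 := hmapmem _ e he1
      have hm2 := Sc.cyc4_edge_mem _ _ _ _ _ he2
      tauto
    · simp only [hF, dif_neg h1, dif_pos h2]
      rw [Set.disjoint_left]
      intro e he1 he2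
      have hm1 := hmapmem _ e he2
      have hm2 := Sc.cyc4_edge_mem _ _ _ _ _ he1
      tauto
    · simp only [hF, dif_neg h1, dif_neg h2]
      have hk12 : (i1 : ℕ) - M.length ≠ (i2 : ℕ) - M.length := by omega
      apply Sc.cyc4_edgeSet_disjoint <;> simp only [hak, hbk, ne_eq, Fin.mk.injEq] <;> omega
  · -- disjoint from J
    intro i
    rw [hJedge, Set.disjoint_union_right]
    constructor
    · by_cases h : (i : ℕ) < M.length
      · simp only [hF, dif_pos h]
        exact hdisjmap _ _ (hdisjI0 ⟨i, h⟩)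
      · simp only [hF, dif_neg h]
        rw [Set.disjoint_left]
        intro e he1 he2
        have hm1 := hmapmem _ e he2
        have hm2 := Sc.cyc4_edge_mem _ _ _ _ _ he1
        tauto
    · rw [Set.disjoint_singleton_right]
      by_cases h : (i : ℕ) < M.length
      · simp only [hF, dif_pos h]
        intro hmem
        exact (hmapmem _ _ hmem).1 (by simp [Sym2.mem_iff])
      · simp only [hF, dif_neg h]
        exact Sc.cyc4_not_mem_uv _ _ _ _ _
  · -- covers
    apply Set.Subset.antisymm
    · exact Set.union_subset (Set.iUnion_subset fun i => (F i).edgeSet_subset)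
        J.edgeSet_subset
    · intro e he
      induction e with
      | _ x y =>
        rw [SimpleGraph.mem_edgeSet, top_adj] at he
        have hvalne : (x : ℕ) ≠ (y : ℕ) := fun h => he (Fin.ext h)
        have hxlt := x.2
        have hylt := y.2
        -- key step for the mixed case
        have hmix : ∀ z w : Fin n, (z : ℕ) < m → ¬ (w : ℕ) < m →
            s(z, w) ∈ (⋃ i, (F i).edgeSet) ∪ J.edgeSet := by
          intro z w hz hw
          have hwlt := w.2
          set k : Fin q := ⟨(z : ℕ) / 2, by omega⟩ with hk
          have hkv : (k : ℕ) = (z : ℕ) / 2 := rfl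
          have hzk : z = ak k ∨ z = bk k := by
            rcases Nat.even_or_odd (z : ℕ) with ⟨c, hc⟩ | ⟨c, hc⟩
            · left; simp only [hak, Fin.ext_iff, hkv]; omega
            · right; simp only [hbk, Fin.ext_iff, hkv]; omega
          have hwuv : w = u ∨ w = v := by
            rcases Nat.lt_or_ge (w : ℕ) (m + 1) with h' | h'
            · left; simp only [hu, Fin.ext_iff]; omega
            · right; simp only [hv, Fin.ext_iff]; omega
          have hmemC : s(z, w) ∈ (C k).edgeSet := by
            rw [hCedge]
            simp only [Set.mem_insert_iff, Set.mem_singleton_iff]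
            rcases hzk with h | h <;> rcases hwuv with rfl | rfl <;> rw [h]
            · exact Or.inl Sym2.eq_swap
            · exact Or.inr (Or.inl rfl)
            · exact Or.inr (Or.inr (Or.inr rfl))
            · exact Or.inr (Or.inr (Or.inl Sym2.eq_swap))
          left
          rw [Set.mem_iUnion]
          have hk2 := k.2
          refine ⟨⟨M.length + (k : ℕ), by rw [hlen]; omega⟩, ?_⟩
          simp only [hF]
          rw [dif_neg (by simp)]
          convert hmemC using 3
          simp only [Fin.ext_iff]
          omega
        by_cases hx : (x : ℕ) < m <;> by_cases hy : (y : ℕ) < m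
        · -- both low
          have hxy' : s(⟨(x : ℕ), hx⟩, (⟨(y : ℕ), hy⟩ : Fin m)) ∈
              (⊤ : SimpleGraph (Fin m)).edgeSet := by
            rw [SimpleGraph.mem_edgeSet, top_adj]
            simp only [ne_eq, Fin.mk.injEq]
            omega
          rw [← hcov0] at hxy'
          have hjx : j ⟨(x : ℕ), hx⟩ = x := rfl
          have hjy : j ⟨(y : ℕ), hy⟩ = y := rfl
          simp only [Set.mem_union, Set.mem_iUnion] at hxy'
          rcases hxy' with ⟨i0, hmem⟩ | hmem
          · left
            rw [Set.mem_iUnion]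
            refine ⟨⟨(i0 : ℕ), lt_of_lt_of_le i0.2 (by rw [hlen]; omega)⟩, ?_⟩
            simp only [hF]
            rw [dif_pos i0.2]
            rw [Sc.edgeSet_map']
            exact ⟨_, hmem, rfl⟩
          · right
            rw [hJedge]
            left
            rw [Sc.edgeSet_map']
            exact ⟨_, hmem, rfl⟩
        · exact hmix x y hx hy
        · rw [Sym2.eq_swap]
          exact hmix y x hy hx
        · -- both high
          right
          rw [hJedge]
          have hxuv : x = u ∨ x = v := by
            rcases Nat.lt_or_ge (x : ℕ) (m + 1) with h' | h'
            · left; simp only [hu, Fin.ext_iff]; omega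
            · right; simp only [hv, Fin.ext_iff]; omega
          have hyuv : y = u ∨ y = v := by
            rcases Nat.lt_or_ge (y : ℕ) (m + 1) with h' | h'
            · left; simp only [hu, Fin.ext_iff]; omega
            · right; simp only [hv, Fin.ext_iff]; omega
          right
          rcases hxuv with rfl | rfl <;> rcases hyuv with rfl | rfl
          · exact absurd rfl he
          · exact rfl
          · exact Sym2.eq_swap
          · exact absurd rfl he
end Sc

/-- `n` even, many four-cycles, no Hamilton cycles. -/
theorem even_no_ham_many_fours (n : ℕ) (heven : Even n)
    (hind : ∀ M' : List ℕ, Admissible (n - 2) M' → KDecomp (n - 2) M')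
    (M : List ℕ)
    (hanc : AncestorList n (M ++ List.replicate ((n - 2) / 2) 4))
    (hno : M.count n = 0) :
    KDecomp n (M ++ List.replicate ((n - 2) / 2) 4) := by
  classical
  rcases Nat.eq_zero_or_pos n with hn0 | hnpos
  · -- n = 0 case
    subst hn0
    have hM : M = [] := by
      rcases M with _ | ⟨e, M'⟩
      · rfl
      · exact absurd (hanc.1.1 e (by simp)) (by omega)
    subst hM
    refine Or.inr ⟨Even.zero, Fin.elim0 ∘ Fin.cast (by simp), ⊤, ?_, ?_, ?_, ?_, ?_⟩
    · exact ⟨fun x _ => x.elim0, fun x => x.elim0⟩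
    · intro i; exact absurd i.isLt (by simp)
    · intro i; exact absurd i.isLt (by simp)
    · intro i; exact absurd i.isLt (by simp)
    · apply Set.Subset.antisymm
      · apply Set.union_subset
        · exact Set.iUnion_subset fun i => absurd i.isLt (by simp)
        · exact Subgraph.edgeSet_subset _
      · intro e he
        right
        rwa [Subgraph.edgeSet_top]
  · have hn2 : 2 ≤ n := by obtain ⟨c, hc⟩ := heven; omega
    have hm2 : (n - 2) + 2 = n := by omega
    have hq2 : 2 * ((n - 2) / 2) = n - 2 := by obtain ⟨c, hc⟩ := heven; omega
    obtain ⟨c, hc⟩ := id heven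
    have hadm : Admissible (n - 2) M := by
      obtain ⟨⟨hmem, hsum⟩, _, _, _, _, h5cond, _⟩ := hanc
      constructor
      · intro e heM
        obtain ⟨he3, hen⟩ := hmem e (List.mem_append_left _ heM)
        have hne_n : e ≠ n := fun h => (List.count_eq_zero.mp hno) (h ▸ heM)
        have hnen1 : e ≠ n - 1 := by
          intro h
          by_cases h4 : 4 ≤ n
          · have hcount4 : 1 ≤ (M ++ List.replicate ((n - 2) / 2) 4).count 4 := by
              rw [List.count_append, List.count_replicate_self]
              omega
            have h0 := (h5cond hcount4).2
            exact (List.count_eq_zero.mp h0) (List.mem_append_left _ (h ▸ heM))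
          · omega
        exact ⟨he3, by omega⟩
      · rw [List.sum_append, List.sum_replicate, smul_eq_mul] at hsum
        have h1 : (n - 1) / 2 = c - 1 := by omega
        have h3 : (n - 2) / 2 = c - 1 := by omega
        have h2 : (n - 2 - 1) / 2 = c - 2 := by omega
        rw [h1, h3] at hsum
        rw [h2]
        have key : (n - 2) * (c - 2) + (c - 1) * 4 = n * (c - 1) := by
          rcases Nat.lt_or_ge c 2 with h | h
          · interval_cases c <;> omega
          · obtain ⟨e, rfl⟩ : ∃ e, c = e + 2 := ⟨c - 2, by omega⟩
            have hn : n = 2 * e + 4 := by omega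
            rw [hn]
            have e1 : 2 * e + 4 - 2 = 2 * e + 2 := by omega
            have e2 : e + 2 - 2 = e := by omega
            have e3 : e + 2 - 1 = e + 1 := by omega
            rw [e1, e2, e3]
            ring
        exact Nat.add_right_cancel (hsum.trans key.symm)
    have hKD := hind M hadm
    have hmeven : Even (n - 2) := by obtain ⟨c, hc⟩ := heven; exact ⟨c - 1, by omega⟩
    rcases hKD with ⟨hodd, _⟩ | ⟨_, hdec⟩
    · exact absurd hodd (by simpa using hmeven)
    exact Or.inr ⟨heven, Sc.extend hm2 hq2 M hdec⟩
end

section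
/- Let n be even and suppose that for every (n−2)-admissible list M′ there is an (M′)-decomposition of K_{n−2}. If the list (M, 5^{n−2}) obtained from M by adjoining n−2 occurrences of 5 is an n-ancestor list with ν_n(M) = 0, then there is an (M, 5^{n−2})-decomposition of K_n. -/
open SimpleGraph

namespace CycAux
open Function Set

lemma mod_small {a k : ℕ} (h : a < 2*k) : a % k = if a < k then a else a - k := by
  split <;> rename_i h'
  · exact Nat.mod_eq_of_lt h'
  · rw [Nat.mod_eq_sub_mod (by omega), Nat.mod_eq_of_lt (by omega)]

variable {k : ℕ} [NeZero k]

lemma val_one3 (hk : 3 ≤ k) : (1 : Fin k).val = 1 := by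
  rw [Fin.val_one', Nat.mod_eq_of_lt (by omega)]

lemma val_succ (hk : 3 ≤ k) (i : Fin k) :
    ((i + 1 : Fin k)).val = if i.val + 1 < k then i.val + 1 else 0 := by
  have hi := i.isLt
  rw [Fin.val_add, val_one3 hk, mod_small (by omega)]
  split <;> omega

lemma fin_add_one_ne (hk : 3 ≤ k) (i : Fin k) : i + 1 ≠ i := by
  intro h
  have h2 := congrArg Fin.val h
  rw [val_succ hk] at h2
  have := i.isLt
  split at h2 <;> omega

lemma fin_add_two_ne (hk : 3 ≤ k) (j : Fin k) : j + 1 + 1 ≠ j := by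
  intro h
  have h2 := congrArg Fin.val h
  rw [val_succ hk, val_succ hk] at h2
  have := j.isLt
  split at h2 <;> split at h2 <;> omega

lemma fin_no_swap (hk : 3 ≤ k) {i j : Fin k} (h1 : i = j + 1) (h2 : j = i + 1) : False := by
  apply fin_add_two_ne hk j
  rw [← h1, ← h2]

lemma fin_succ_ne_pred (hk : 3 ≤ k) (j : Fin k) : j + 1 ≠ j - 1 := by
  intro h
  apply fin_add_two_ne hk j
  rw [h, sub_add_cancel]

/-- The cycle subgraph on the (injective) vertex sequence `w`. -/
def cycSub {V : Type*} (w : Fin k → V) : (⊤ : SimpleGraph V).Subgraph where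
  verts := Set.range w
  Adj u v := u ≠ v ∧ ∃ i : Fin k, (u = w i ∧ v = w (i+1)) ∨ (v = w i ∧ u = w (i+1))
  adj_sub := by rintro u v ⟨hne, _⟩; exact hne
  edge_vert := by
    rintro u v ⟨hne, i, (⟨h1, h2⟩ | ⟨h1, h2⟩)⟩
    · exact ⟨i, h1.symm⟩
    · exact ⟨i + 1, h2.symm⟩
  symm := by
    constructor
    rintro u v ⟨hne, i, h⟩
    exact ⟨hne.symm, i, h.symm⟩

variable {V : Type*} {w : Fin k → V}

lemma cycSub_adj {u v : V} :
    (cycSub w).Adj u v ↔ u ≠ v ∧ ∃ i : Fin k, (u = w i ∧ v = w (i+1)) ∨ (v = w i ∧ u = w (i+1)) :=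
  Iff.rfl

lemma cycSub_verts : (cycSub w).verts = Set.range w := rfl

lemma cycSub_adj_of (hw : Injective w) (hk : 3 ≤ k) (i : Fin k) :
    (cycSub w).Adj (w i) (w (i+1)) :=
  ⟨fun h => fin_add_one_ne hk i (hw h.symm), i, Or.inl ⟨rfl, rfl⟩⟩

lemma cycSub_edgeSet (hw : Injective w) (hk : 3 ≤ k) :
    (cycSub w).edgeSet = Set.range (fun i : Fin k => s(w i, w (i+1))) := by
  ext e
  induction e using Sym2.ind with
  | _ u v =>
    rw [Subgraph.mem_edgeSet, cycSub_adj]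
    constructor
    · rintro ⟨hne, i, (⟨h1, h2⟩ | ⟨h1, h2⟩)⟩
      · exact ⟨i, by rw [h1, h2]⟩
      · exact ⟨i, by rw [h1, h2, Sym2.eq_swap]⟩
    · rintro ⟨i, hi⟩
      have h := (cycSub_adj_of hw hk i)
      rw [Sym2.eq_iff] at hi
      rcases hi with ⟨rfl, rfl⟩ | ⟨rfl, rfl⟩
      · exact h
      · exact h.symm

lemma cycSub_nbr (hw : Injective w) (hk : 3 ≤ k) (j : Fin k) :
    (cycSub w).neighborSet (w j) = {w (j+1), w (j-1)} := by
  ext u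
  rw [Subgraph.mem_neighborSet, cycSub_adj]
  constructor
  · rintro ⟨hne, i, (⟨hji, rfl⟩ | ⟨rfl, hji⟩)⟩
    · rw [hw hji]; exact Or.inl rfl
    · have h1 : j = i + 1 := hw hji
      have h2 : i = j - 1 := by rw [h1, add_sub_cancel_right]
      rw [h2]; exact Or.inr rfl
  · rintro (rfl | rfl)
    · exact ⟨fun h => fin_add_one_ne hk j (hw h.symm), j, Or.inl ⟨rfl, rfl⟩⟩
    · refine ⟨fun h => ?_, j - 1, Or.inr ⟨rfl, by rw [sub_add_cancel]⟩⟩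
      have h1 : j = j - 1 := hw h
      apply fin_add_one_ne hk (j - 1)
      rw [sub_add_cancel, ← h1]

lemma cycSub_edge_inj (hw : Injective w) (hk : 3 ≤ k) :
    Injective (fun i : Fin k => s(w i, w (i+1))) := by
  intro i j h
  rw [Sym2.eq_iff] at h
  rcases h with ⟨h1, _⟩ | ⟨h1, h2⟩
  · exact hw h1
  · exact (fin_no_swap hk (hw h1) (hw h2).symm).elim

lemma cycSub_connected (hw : Injective w) (hk : 3 ≤ k) : (cycSub w).coe.Connected := by
  rw [connected_iff]
  constructor
  · intro u v
    obtain ⟨u, hu⟩ := u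
    obtain ⟨v, hv⟩ := v
    have key : ∀ (m : ℕ) (j : Fin k), j.val = m →
        (cycSub w).coe.Reachable ⟨w 0, ⟨0, rfl⟩⟩ ⟨w j, ⟨j, rfl⟩⟩ := by
      intro m
      induction m with
      | zero =>
        intro j hj
        have : j = 0 := Fin.ext (by rw [hj]; simp)
        rw [this]
      | succ m ih =>
        intro j hj
        have hm : m < k := by have := j.isLt; omega
        have hj' : j = ⟨m, hm⟩ + 1 := by
          apply Fin.ext
          rw [val_succ hk, hj]
          dsimp only
          split <;> omega
        have hr := ih ⟨m, hm⟩ rfl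
        refine hr.trans (SimpleGraph.Adj.reachable ?_)
        have hadj := cycSub_adj_of hw hk ⟨m, hm⟩
        rw [← hj'] at hadj
        exact hadj
    obtain ⟨i, rfl⟩ := hu
    obtain ⟨j, rfl⟩ := hv
    exact ((key i.val i rfl).symm.trans (key j.val j rfl))
  · exact ⟨⟨w 0, ⟨0, rfl⟩⟩⟩

lemma isCycleSub_cycSub (hw : Injective w) (hk : 3 ≤ k) : IsCycleSub (cycSub w) k := by
  refine ⟨cycSub_connected hw hk, ?_, ?_⟩
  · rintro v ⟨j, rfl⟩
    rw [cycSub_nbr hw hk]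
    exact Set.ncard_pair (fun h => fin_succ_ne_pred hk j (hw h))
  · rw [cycSub_edgeSet hw hk, ← Set.image_univ,
      Set.ncard_image_of_injective _ (cycSub_edge_inj hw hk)]
    simp [Set.ncard_univ]

lemma set_eq_pair {α : Type*} {S : Set α} [Finite α] (h2 : S.ncard = 2) {a b : α}
    (ha : a ∈ S) (hb : b ∈ S) (hab : a ≠ b) : S = {a, b} := by
  symm
  apply Set.eq_of_subset_of_ncard_le
  · rintro u (rfl | rfl) <;> assumption
  · rw [h2, Set.ncard_pair hab]
  · exact Set.toFinite S

theorem exists_cycle_enum {V : Type*} [Fintype V] {G : SimpleGraph V} {H : G.Subgraph} {k : ℕ}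
    [NeZero k] (hk : 3 ≤ k) (hc : IsCycleSub H k) :
    ∃ x : Fin k → V, Function.Injective x ∧
      H.edgeSet = Set.range (fun i : Fin k => s(x i, x (i+1))) := by
  classical
  obtain ⟨hconn, hreg, hcard⟩ := hc
  obtain ⟨⟨v0, hv0⟩⟩ := hconn.nonempty
  have hpair : ∀ v ∈ H.verts, ∃ a b : V, a ≠ b ∧ H.neighborSet v = {a, b} :=
    fun v hv => Set.ncard_eq_two.mp (hreg v hv)
  have hnext : ∀ v q1 : V, ∃ r : V, v ∈ H.verts → q1 ∈ H.neighborSet v →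
      (r ∈ H.neighborSet v ∧ r ≠ q1 ∧ ∀ u ∈ H.neighborSet v, u ≠ q1 → u = r) := by
    intro v q1
    by_cases hv : v ∈ H.verts
    · obtain ⟨a, b, hab, hset⟩ := hpair v hv
      by_cases hq : q1 ∈ H.neighborSet v
      · rw [hset] at hq
        rcases hq with rfl | rfl
        · refine ⟨b, fun _ _ => ⟨by rw [hset]; exact Or.inr rfl, hab.symm, ?_⟩⟩
          intro u hu hne
          rw [hset] at hu
          rcases hu with rfl | rfl
          · exact absurd rfl hne
          · rfl
        · refine ⟨a, fun _ _ => ⟨by rw [hset]; exact Or.inl rfl, hab, ?_⟩⟩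
          intro u hu hne
          rw [hset] at hu
          rcases hu with rfl | rfl
          · rfl
          · exact absurd rfl hne
      · exact ⟨v, fun _ hq' => (hq hq').elim⟩
    · exact ⟨v, fun hv' => (hv hv').elim⟩
  choose nxt hnxt using hnext
  obtain ⟨w0, b0, hw0b0, hnbr0⟩ := hpair v0 hv0
  have hw0 : w0 ∈ H.neighborSet v0 := by rw [hnbr0]; exact Or.inl rfl
  set q : ℕ → V × V := fun m => Nat.rec (v0, w0) (fun _ pr => (pr.2, nxt pr.2 pr.1)) m with hq
  set x : ℕ → V := fun m => (q m).1 with hxdef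
  have hstep : ∀ m, x (m + 2) = nxt (x (m + 1)) (x m) := fun m => rfl
  have hA : ∀ m, H.Adj (x m) (x (m + 1)) := by
    intro m
    induction m with
    | zero => exact hw0
    | succ m ih =>
      have hv : x (m + 1) ∈ H.verts := H.edge_vert ih.symm
      have hm : x m ∈ H.neighborSet (x (m + 1)) := ih.symm
      have h := (hnxt (x (m + 1)) (x m) hv hm).1
      rw [← hstep m] at h
      exact h
  have hxv : ∀ m, x m ∈ H.verts := fun m => H.edge_vert (hA m)
  have hNe : ∀ m, x (m + 2) ≠ x m := by
    intro m
    have hv : x (m + 1) ∈ H.verts := H.edge_vert (hA m).symm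
    have hm : x m ∈ H.neighborSet (x (m + 1)) := (hA m).symm
    have h := (hnxt (x (m + 1)) (x m) hv hm).2.1
    rw [← hstep m] at h
    exact h
  have hP : ∃ m, ∃ j, j < m ∧ x m = x j := by
    obtain ⟨a, b, hne, heq⟩ := Finite.exists_ne_map_eq_of_infinite x
    rcases hne.lt_or_gt with h | h
    · exact ⟨b, a, h, heq.symm⟩
    · exact ⟨a, b, h, heq⟩
  obtain ⟨p, ⟨j0, hj0lt, hj0eq⟩, hp_min⟩ :
      ∃ p, (∃ j, j < p ∧ x p = x j) ∧ ∀ m, m < p → ¬∃ j, j < m ∧ x m = x j :=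
    ⟨Nat.find hP, Nat.find_spec hP, fun m hm => Nat.find_min hP hm⟩
  have hinj : ∀ a b : ℕ, a < b → b < p → x a ≠ x b :=
    fun a b hab hbp heq => hp_min b hbp ⟨a, hab, heq.symm⟩
  have hadjne : ∀ m, x m ≠ x (m + 1) := fun m => G.ne_of_adj (H.adj_sub (hA m))
  have hp3 : 3 ≤ p := by
    rcases Nat.lt_or_ge p 3 with h | h
    · interval_cases p
      · omega
      · have h0 : j0 = 0 := by omega
        subst h0
        exact absurd hj0eq (hadjne 0).symm
      · rcases (by omega : j0 = 0 ∨ j0 = 1) with rfl | rfl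
        · exact absurd hj0eq (hNe 0)
        · exact absurd hj0eq (hadjne 1).symm
    · exact h
  have hnbrs : ∀ m : ℕ, H.neighborSet (x (m + 1)) = {x m, x (m + 2)} :=
    fun m => set_eq_pair (hreg _ (hxv (m + 1))) (hA m).symm (hA (m + 1))
      (fun h => hNe m h.symm)
  -- first repetition closes the cycle
  obtain ⟨pm, hpm⟩ : ∃ pm, p = pm + 1 := ⟨p - 1, by omega⟩
  have hxp : x p = x 0 := by
    rcases Nat.eq_zero_or_pos j0 with rfl | hj0pos
    · exact hj0eq
    · exfalso
      obtain ⟨jm, hjm⟩ : ∃ jm, j0 = jm + 1 := ⟨j0 - 1, by omega⟩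
      have hmem : x pm ∈ H.neighborSet (x j0) := by
        have h := (hA pm).symm
        rw [← hpm, hj0eq] at h
        exact h
      rw [hjm, hnbrs jm] at hmem
      rcases hmem with h | h
      · exact hp_min pm (by omega) ⟨jm, by omega, h⟩
      · rcases lt_trichotomy (jm + 2) pm with hlt | heq | hgt
        · exact hp_min pm (by omega) ⟨jm + 2, hlt, h⟩
        · apply hNe j0
          rw [show j0 + 2 = p by omega, hj0eq]
        · have hj0pm : j0 = pm := by omega
          apply hadjne pm
          rw [show pm + 1 = p from hpm.symm, hj0eq, hj0pm]
  -- closure of the enumerated set under adjacency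
  have hnbr0' : H.neighborSet (x 0) = {x 1, x pm} := by
    apply set_eq_pair (hreg _ (hxv 0)) (hA 0)
    · have h := (hA pm).symm
      rw [← hpm, hxp] at h
      exact h
    · exact fun h => hinj 1 pm (by omega) (by omega) h
  have hclose : ∀ m, m < p → ∀ u : V, H.Adj (x m) u → ∃ m', m' < p ∧ u = x m' := by
    intro m hm u hu
    rcases Nat.eq_zero_or_pos m with rfl | hmpos
    · have hu' : u ∈ H.neighborSet (x 0) := hu
      rw [hnbr0'] at hu'
      rcases hu' with rfl | rfl
      · exact ⟨1, by omega, rfl⟩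
      · exact ⟨pm, by omega, rfl⟩
    · obtain ⟨mm, rfl⟩ : ∃ mm, m = mm + 1 := ⟨m - 1, by omega⟩
      have hu' : u ∈ H.neighborSet (x (mm + 1)) := hu
      rw [hnbrs mm] at hu'
      rcases hu' with rfl | rfl
      · exact ⟨mm, by omega, rfl⟩
      · rcases Nat.lt_or_ge (mm + 2) p with h | h
        · exact ⟨mm + 2, h, rfl⟩
        · refine ⟨0, by omega, ?_⟩
          rw [show mm + 2 = p by omega, hxp]
  -- all vertices are enumerated
  have hverts : ∀ v ∈ H.verts, ∃ m, m < p ∧ v = x m := by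
    intro v hv
    obtain ⟨wk⟩ := hconn.preconnected ⟨x 0, hxv 0⟩ ⟨v, hv⟩
    have key : ∀ (a b : H.verts) (wk : H.coe.Walk a b),
        (∃ m, m < p ∧ (a : V) = x m) → (∃ m, m < p ∧ (b : V) = x m) := by
      intro a b wk
      induction wk with
      | nil => exact id
      | @cons a c b h q ih =>
        intro ha
        apply ih
        obtain ⟨m, hm, hxm⟩ := ha
        have hadj : H.Adj (a : V) (c : V) := h
        rw [hxm] at hadj
        obtain ⟨m', hm', h'⟩ := hclose m hm _ hadj
        exact ⟨m', hm', h'⟩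
    exact key _ _ wk ⟨0, by omega, rfl⟩
  -- transfer to Fin p
  haveI : NeZero p := ⟨by omega⟩
  set X : Fin p → V := fun i => x i.val with hX
  have hXinj : Injective X := by
    intro i j h
    rcases lt_trichotomy i.val j.val with h' | h' | h'
    · exact absurd h (hinj _ _ h' j.isLt)
    · exact Fin.ext h'
    · exact absurd h.symm (hinj _ _ h' i.isLt)
  have hX1 : ∀ i : Fin p, X (i + 1) = x (i.val + 1) := by
    intro i
    show x ((i + 1 : Fin p)).val = x (i.val + 1)
    rw [val_succ hp3]
    split
    · rfl
    · rename_i hcase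
      rw [show i.val + 1 = p by have := i.isLt; omega, hxp]
  have hin : ∀ m, m < p → s(x m, x (m + 1)) ∈ Set.range (fun i : Fin p => s(X i, X (i + 1))) := by
    intro m hm
    refine ⟨⟨m, hm⟩, ?_⟩
    show s(X ⟨m, hm⟩, X (⟨m, hm⟩ + 1)) = _
    rw [hX1]
  have hedge : H.edgeSet = Set.range (fun i : Fin p => s(X i, X (i + 1))) := by
    ext e
    induction e using Sym2.ind with
    | _ u v =>
      constructor
      · intro he
        rw [Subgraph.mem_edgeSet] at he
        obtain ⟨m, hm, rfl⟩ := hverts u (H.edge_vert he)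
        rcases Nat.eq_zero_or_pos m with rfl | hmpos
        · have hv' : v ∈ H.neighborSet (x 0) := he
          rw [hnbr0'] at hv'
          rcases hv' with rfl | rfl
          · exact hin 0 (by omega)
          · have heq : s(x 0, x pm) = s(x pm, x (pm + 1)) := by
              rw [← hpm, hxp, Sym2.eq_swap]
            rw [heq]
            exact hin pm (by omega)
        · obtain ⟨mm, rfl⟩ : ∃ mm, m = mm + 1 := ⟨m - 1, by omega⟩
          have hv' : v ∈ H.neighborSet (x (mm + 1)) := he
          rw [hnbrs mm] at hv'
          rcases hv' with rfl | rfl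
          · rw [Sym2.eq_swap]
            exact hin mm (by omega)
          · exact hin (mm + 1) hm
      · rintro ⟨i, hi⟩
        rw [← hi]
        show s(X i, X (i + 1)) ∈ H.edgeSet
        rw [hX1, Subgraph.mem_edgeSet]
        exact hA i.val
  have hkp : p = k := by
    rw [hedge, ← Set.image_univ,
      Set.ncard_image_of_injective _ (cycSub_edge_inj hXinj hp3)] at hcard
    simp [Set.ncard_univ] at hcard
    omega
  subst hkp
  exact ⟨X, hXinj, hedge⟩

lemma inj5 {α : Type*} {a b c d e : α} (h1 : a ≠ b) (h2 : a ≠ c) (h3 : a ≠ d) (h4 : a ≠ e)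
    (h5 : b ≠ c) (h6 : b ≠ d) (h7 : b ≠ e) (h8 : c ≠ d) (h9 : c ≠ e) (h10 : d ≠ e) :
    Function.Injective ![a, b, c, d, e] := by
  intro i j hij
  fin_cases i <;> fin_cases j <;> simp_all

lemma cycSub_edgeSet5 {α : Type*} {w : Fin 5 → α} (hw : Function.Injective w) :
    (cycSub w).edgeSet = {s(w 0, w 1), s(w 1, w 2), s(w 2, w 3), s(w 3, w 4), s(w 4, w 0)} := by
  rw [cycSub_edgeSet hw (by norm_num)]
  ext u
  simp only [Set.mem_insert_iff, Set.mem_singleton_iff]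
  constructor
  · rintro ⟨t, rfl⟩
    fin_cases t
    · exact Or.inl rfl
    · exact Or.inr (Or.inl rfl)
    · exact Or.inr (Or.inr (Or.inl rfl))
    · exact Or.inr (Or.inr (Or.inr (Or.inl rfl)))
    · exact Or.inr (Or.inr (Or.inr (Or.inr rfl)))
  · rintro (rfl | rfl | rfl | rfl | rfl)
    · exact ⟨0, rfl⟩
    · exact ⟨1, rfl⟩
    · exact ⟨2, rfl⟩
    · exact ⟨3, rfl⟩
    · exact ⟨4, rfl⟩

end CycAux

open CycAux Function

lemma kdecomp_small (n : ℕ) (hn : n = 0 ∨ n = 2) : KDecomp n [] := by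
  refine Or.inr ⟨by rcases hn with rfl | rfl <;> decide, ?_⟩
  refine ⟨fun i => i.elim0, ⊤, ?_, fun i => i.elim0, fun i => i.elim0, fun i => i.elim0, ?_⟩
  · rw [SimpleGraph.Subgraph.isPerfectMatching_iff]
    rcases hn with rfl | rfl
    · exact fun v => v.elim0
    · intro v
      have key : ∀ v y : Fin 2, (⊤ : SimpleGraph (Fin 2)).Adj v y → y = v + 1 := by decide
      have adj : ∀ v : Fin 2, (⊤ : SimpleGraph (Fin 2)).Adj v (v + 1) := by decide
      refine ⟨v + 1, ?_, ?_⟩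
      · simp only [SimpleGraph.Subgraph.top_adj]
        exact adj v
      · intro y hy
        simp only [SimpleGraph.Subgraph.top_adj] at hy
        exact key v y hy
  · simp [SimpleGraph.Subgraph.edgeSet_top]

set_option maxHeartbeats 1600000

/-- `n` even, many five-cycles, no Hamilton cycles. -/
theorem even_no_ham_many_fives (n : ℕ) (heven : Even n)
    (hind : ∀ M' : List ℕ, Admissible (n - 2) M' → KDecomp (n - 2) M')
    (M : List ℕ)
    (hanc : AncestorList n (M ++ List.replicate (n - 2) 5))
    (hno : M.count n = 0) :
    KDecomp n (M ++ List.replicate (n - 2) 5) := by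
  classical
  set L := M ++ List.replicate (n - 2) 5 with hL
  have hmem : ∀ m ∈ L, 3 ≤ m ∧ m ≤ n := hanc.1.1
  have hsum : L.sum = n * ((n - 1) / 2) := hanc.1.2
  have hcnt5 : L.count 5 = M.count 5 + (n - 2) := by
    rw [hL, List.count_append, List.count_replicate]; simp
  -- small cases
  rcases Nat.lt_or_ge n 10 with hsmall | hbig
  · obtain ⟨r, hr⟩ := heven
    have hMnil : n < 4 → M = [] := by
      intro h4
      cases M with
      | nil => rfl
      | cons a t =>
        have := hmem a (by rw [hL]; exact List.mem_append_left _ List.mem_cons_self)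
        omega
    interval_cases n <;> try omega
    · have hLnil : L = [] := by rw [hL, hMnil (by omega)]; simp
      rw [hLnil]
      exact kdecomp_small 0 (Or.inl rfl)
    · have hLnil : L = [] := by rw [hL, hMnil (by omega)]; simp
      rw [hLnil]
      exact kdecomp_small 2 (Or.inr rfl)
    · exfalso
      have h5 : (5 : ℕ) ∈ L := by
        rw [hL]
        exact List.mem_append_right _ (by rw [List.mem_replicate]; exact ⟨by omega, rfl⟩)
      have := (hmem 5 h5).2
      omega
    · exfalso
      have := (hanc.2.2.2.2.2.2 (by omega)).2.2.2
      norm_num at this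
      omega
    · exfalso
      have := (hanc.2.2.2.2.2.2 (by omega)).2.1
      norm_num at this
      omega
  -- main case
  obtain ⟨s, hns, hs4⟩ : ∃ s, n = 2 * s + 2 ∧ 4 ≤ s := by
    obtain ⟨r, hr⟩ := heven
    exact ⟨r - 1, by omega, by omega⟩
  have hs3 : 3 ≤ s := by omega
  haveI : NeZero s := ⟨by omega⟩
  have hn2 : n - 2 = 2 * s := by omega
  -- the counts that must vanish
  have hzero := hanc.2.2.2.2.2.2 (by omega)
  have hnotin : ∀ m ∈ M, m ≤ n - 5 := by
    intro m hm
    have hmL : m ∈ L := by rw [hL]; exact List.mem_append_left _ hm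
    have h1 : m ≠ n - 4 := fun h => List.count_eq_zero.mp hzero.1 (h ▸ hmL)
    have h2 : m ≠ n - 3 := fun h => List.count_eq_zero.mp hzero.2.1 (h ▸ hmL)
    have h3 : m ≠ n - 2 := fun h => List.count_eq_zero.mp hzero.2.2.1 (h ▸ hmL)
    have h4 : m ≠ n - 1 := fun h => List.count_eq_zero.mp hzero.2.2.2 (h ▸ hmL)
    have h5 : m ≠ n := by
      intro h
      subst h
      have : m ∈ M → M.count m ≠ 0 := fun hm' h0 => List.count_eq_zero.mp h0 hm'
      exact this hm hno
    have := (hmem m hmL).2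
    omega
  -- the list for the induction hypothesis
  set M' : List ℕ := M ++ (List.replicate s 5 ++ [s]) with hM'
  have hM'len : M'.length = M.length + (s + 1) := by simp [hM']
  have hLlen : L.length = M.length + 2 * s := by simp [hL, hn2]
  have hadm' : Admissible (n - 2) M' := by
    constructor
    · intro m hm
      rw [hM', List.mem_append, List.mem_append] at hm
      rcases hm with hm | hm | hm
      · have h1 := (hmem m (by rw [hL]; exact List.mem_append_left _ hm)).1
        have h2 := hnotin m hm
        exact ⟨h1, by omega⟩
      · rw [List.mem_replicate] at hm
        omega
      · rw [List.mem_singleton] at hm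
        omega
    · have h1 : (n - 1) / 2 = s := by omega
      have h2 : (n - 2 - 1) / 2 = s - 1 := by omega
      rw [hL] at hsum
      rw [hM', h2, hn2]
      simp only [List.sum_append, List.sum_replicate, List.sum_cons, List.sum_nil,
        smul_eq_mul] at hsum ⊢
      rw [h1] at hsum
      have hh : M.sum + (n - 2) * 5 = (2 * s + 2) * s := by rw [← hns, ← hsum]
      rw [hn2] at hh
      zify [show 1 ≤ s by omega] at hh ⊢
      nlinarith [hh]
  -- apply the induction hypothesis
  rcases hind M' hadm' with ⟨hodd, -⟩ | ⟨-, g, I', hIpm, hgcyc, hgdisj, hgI, hgunion⟩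
  · exfalso
    rw [Nat.odd_iff] at hodd
    omega
  -- index of the s-cycle in M'
  have hsIdxlt : M.length + s < M'.length := by omega
  set sIdx : Fin M'.length := ⟨M.length + s, hsIdxlt⟩ with hsIdxdef
  have hgets : M'.get sIdx = s := by
    rw [hsIdxdef, List.get_eq_getElem]
    show M'[M.length + s] = s
    simp only [hM']
    rw [List.getElem_append_right (by omega)]
    rw [List.getElem_append_right (by simp only [List.length_replicate]; omega)]
    simp
  -- list entry lemmas
  have hgeteq : ∀ (i : ℕ), i < M.length + s → ∀ (h1 : i < L.length) (h2 : i < M'.length),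
      L[i] = M'[i] := by
    intro i hi h1 h2
    rw [hM'len] at h2
    rcases Nat.lt_or_ge i M.length with h | h
    · simp only [hL, hM']
      rw [List.getElem_append_left h, List.getElem_append_left h]
    · simp only [hL, hM']
      rw [List.getElem_append_right h, List.getElem_append_right h, List.getElem_replicate,
        List.getElem_append_left (by simp only [List.length_replicate]; omega),
        List.getElem_replicate]
  have hget5 : ∀ (i : ℕ), M.length ≤ i → ∀ (h1 : i < L.length), L[i] = 5 := by
    intro i hi h1
    simp only [hL]
    rw [List.getElem_append_right hi, List.getElem_replicate]
  -- entries of M' are at least 3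
  have hg3 : ∀ j : Fin M'.length, 3 ≤ M'.get j :=
    fun j => (hadm'.1 _ (List.get_mem M' j)).1
  -- the embedding and the two new vertices
  obtain ⟨emb, hembval⟩ : ∃ f : Fin (n - 2) → Fin n, ∀ v, (f v).val = v.val :=
    ⟨fun v => ⟨v.val, by have := v.isLt; omega⟩, fun v => rfl⟩
  have hembinj : Injective emb := by
    intro a b h
    apply Fin.ext
    have h2 := congrArg Fin.val h
    rwa [hembval, hembval] at h2
  obtain ⟨A, hAval⟩ : ∃ A : Fin n, A.val = n - 2 := ⟨⟨n - 2, by omega⟩, rfl⟩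
  obtain ⟨B, hBval⟩ : ∃ B : Fin n, B.val = n - 1 := ⟨⟨n - 1, by omega⟩, rfl⟩
  have hABne : A ≠ B := by
    intro h
    have h2 := congrArg Fin.val h
    rw [hAval, hBval] at h2
    omega
  have hBAne : B ≠ A := fun h => hABne h.symm
  have hembA : ∀ v : Fin (n - 2), emb v ≠ A := by
    intro v h
    have h2 := congrArg Fin.val h
    rw [hembval, hAval] at h2
    have := v.isLt
    omega
  have hembB : ∀ v : Fin (n - 2), emb v ≠ B := by
    intro v h
    have h2 := congrArg Fin.val h
    rw [hembval, hBval] at h2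
    have := v.isLt
    omega
  have hembkey : ∀ (w : Fin n) (hw : w.val < n - 2), emb ⟨w.val, hw⟩ = w :=
    fun w hw => Fin.ext (by rw [hembval])
  -- enumerate and rebuild all cycles of the old decomposition
  have henum : ∀ j : Fin M'.length, ∃ Rj : (⊤ : SimpleGraph (Fin n)).Subgraph,
      IsCycleSub Rj (M'.get j) ∧ Rj.edgeSet = Sym2.map emb '' (g j).edgeSet := by
    intro j
    haveI : NeZero (M'.get j) := ⟨by have := hg3 j; omega⟩
    obtain ⟨xj, hinj, hedge⟩ := exists_cycle_enum (hg3 j) (hgcyc j)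
    refine ⟨cycSub (emb ∘ xj), isCycleSub_cycSub (hembinj.comp hinj) (hg3 j), ?_⟩
    rw [cycSub_edgeSet (hembinj.comp hinj) (hg3 j), hedge, ← Set.range_comp]
    congr 1
  choose R hRcyc hRedge using henum
  -- enumerate the s-cycle
  have hscyc : IsCycleSub (g sIdx) s := by
    have h := hgcyc sIdx
    rw [hgets] at h
    exact h
  obtain ⟨x, hxinj, hxedge⟩ := exists_cycle_enum hs3 hscyc
  -- complement of the s-cycle vertex set
  set Sfin : Finset (Fin (n - 2)) := Finset.image x Finset.univ with hSfin
  have hcardS : Sfin.card = s := by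
    rw [hSfin, Finset.card_image_of_injective _ hxinj, Finset.card_univ, Fintype.card_fin]
  have hcardC : Sfinᶜ.card = s := by
    rw [Finset.card_compl, hcardS, Fintype.card_fin]
    omega
  obtain ⟨z, hzap⟩ : ∃ f : Fin s → Fin (n - 2),
      ∀ i, f i = ((Sfinᶜ.orderIsoOfFin hcardC) i : Fin (n - 2)) := ⟨_, fun i => rfl⟩
  have hzinj : Injective z := by
    intro a b h
    rw [hzap, hzap] at h
    exact (Sfinᶜ.orderIsoOfFin hcardC).injective (Subtype.coe_injective h)
  have hznotin : ∀ i a, z i ≠ x a := by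
    intro i a h
    rw [hzap] at h
    have hmem := ((Sfinᶜ.orderIsoOfFin hcardC) i).2
    rw [Finset.mem_compl] at hmem
    apply hmem
    rw [h, hSfin]
    exact Finset.mem_image.mpr ⟨a, Finset.mem_univ a, rfl⟩
  have hzsurj : ∀ v : Fin (n - 2), (∀ a, v ≠ x a) → ∃ i, z i = v := by
    intro v hv
    have hvc : v ∈ Sfinᶜ := by
      rw [Finset.mem_compl, hSfin]
      intro h
      obtain ⟨a, -, ha⟩ := Finset.mem_image.mp h
      exact hv a ha.symm
    obtain ⟨i, hi⟩ := (Sfinᶜ.orderIsoOfFin hcardC).surjective ⟨v, hvc⟩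
    refine ⟨i, ?_⟩
    rw [hzap]
    exact congrArg Subtype.val hi
  -- shorthands
  obtain ⟨ex, hexap⟩ : ∃ f : Fin s → Fin n, ∀ i, f i = emb (x i) := ⟨_, fun i => rfl⟩
  obtain ⟨ez, hezap⟩ : ∃ f : Fin s → Fin n, ∀ i, f i = emb (z i) := ⟨_, fun i => rfl⟩
  have hexinj : Injective ex := by
    intro a b h
    rw [hexap, hexap] at h
    exact hxinj (hembinj h)
  have hezinj : Injective ez := by
    intro a b h
    rw [hezap, hezap] at h
    exact hzinj (hembinj h)
  have hexez : ∀ a b, ex a ≠ ez b := by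
    intro a b h
    rw [hexap, hezap] at h
    exact hznotin b a (hembinj h).symm
  have hezex : ∀ a b, ez a ≠ ex b := fun a b h => hexez b a h.symm
  have hexA : ∀ a, ex a ≠ A := by
    intro a h
    rw [hexap] at h
    exact hembA (x a) h
  have hexB : ∀ a, ex a ≠ B := by
    intro a h
    rw [hexap] at h
    exact hembB (x a) h
  have hezA : ∀ a, ez a ≠ A := by
    intro a h
    rw [hezap] at h
    exact hembA (z a) h
  have hezB : ∀ a, ez a ≠ B := by
    intro a h
    rw [hezap] at h
    exact hembB (z a) h
  have hAex : ∀ a, A ≠ ex a := fun a => (hexA a).symm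
  have hBex : ∀ a, B ≠ ex a := fun a => (hexB a).symm
  have hAez : ∀ a, A ≠ ez a := fun a => (hezA a).symm
  have hBez : ∀ a, B ≠ ez a := fun a => (hezB a).symm
  have hxne : ∀ t : Fin s, x t ≠ x (t + 1) := fun t h => fin_add_one_ne hs3 t ((hxinj h).symm)
  -- the new five-cycles
  haveI : NeZero (5 : ℕ) := ⟨by norm_num⟩
  have hw5inj : ∀ t : Fin s, Injective ![A, ex t, ex (t + 1), B, ez t] := by
    intro t
    have hd : ex t ≠ ex (t + 1) := by
      intro h
      rw [hexap, hexap] at h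
      exact hxne t (hembinj h)
    exact inj5 (hAex t) (hAex (t + 1)) hABne (hAez t)
      hd (hexB t) (hexez t t) (hexB (t + 1)) (hexez (t + 1) t) (hBez t)
  obtain ⟨C, hCdef⟩ : ∃ C : Fin s → (⊤ : SimpleGraph (Fin n)).Subgraph,
      ∀ t, C t = cycSub ![A, ex t, ex (t + 1), B, ez t] := ⟨_, fun t => rfl⟩
  have hCcyc : ∀ t, IsCycleSub (C t) 5 := by
    intro t
    rw [hCdef]
    exact isCycleSub_cycSub (hw5inj t) (by norm_num)
  have hCedge : ∀ t, (C t).edgeSet =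
      {s(A, ex t), s(ex t, ex (t + 1)), s(ex (t + 1), B), s(B, ez t), s(ez t, A)} := by
    intro t
    rw [hCdef, cycSub_edgeSet5 (hw5inj t)]
    rfl
  -- image disjointness helper
  have himgdisj : ∀ {S T : Set (Sym2 (Fin (n - 2)))}, Disjoint S T →
      Disjoint (Sym2.map emb '' S) (Sym2.map emb '' T) := by
    intro S T hST
    rw [Set.disjoint_left] at hST ⊢
    rintro e ⟨e1, he1, rfl⟩ ⟨e2, he2, hmape⟩
    have heq : e2 = e1 := Sym2.map.injective hembinj hmape
    subst heq
    exact hST he1 he2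
  -- the new matching
  set Inew : (⊤ : SimpleGraph (Fin n)).Subgraph :=
    { verts := Set.univ
      Adj := fun u v => (∃ (hu : u.val < n - 2) (hv : v.val < n - 2),
          I'.Adj ⟨u.val, hu⟩ ⟨v.val, hv⟩) ∨ (u = A ∧ v = B) ∨ (u = B ∧ v = A)
      adj_sub := by
        rintro u v (⟨hu, hv, hadj⟩ | ⟨rfl, rfl⟩ | ⟨rfl, rfl⟩)
        · have hne := I'.adj_sub hadj
          rw [SimpleGraph.top_adj] at hne ⊢
          intro h
          subst h
          exact hne (Fin.ext rfl)
        · rw [SimpleGraph.top_adj]; exact hABne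
        · rw [SimpleGraph.top_adj]; exact hBAne
      edge_vert := fun {_ _} _ => Set.mem_univ _
      symm := by
        constructor
        rintro u v (⟨hu, hv, hadj⟩ | ⟨rfl, rfl⟩ | ⟨rfl, rfl⟩)
        · exact Or.inl ⟨hv, hu, hadj.symm⟩
        · exact Or.inr (Or.inr ⟨rfl, rfl⟩)
        · exact Or.inr (Or.inl ⟨rfl, rfl⟩) } with hInew
  have hInewAdj : ∀ u v : Fin n, Inew.Adj u v ↔ ((∃ (hu : u.val < n - 2) (hv : v.val < n - 2),
      I'.Adj ⟨u.val, hu⟩ ⟨v.val, hv⟩) ∨ (u = A ∧ v = B) ∨ (u = B ∧ v = A)) := by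
    intro u v
    rw [hInew]
  have hInewpm : Inew.IsPerfectMatching := by
    rw [SimpleGraph.Subgraph.isPerfectMatching_iff]
    rw [SimpleGraph.Subgraph.isPerfectMatching_iff] at hIpm
    intro v
    rcases Nat.lt_or_ge v.val (n - 2) with hv | hv
    · obtain ⟨w', hw', huni⟩ := hIpm ⟨v.val, hv⟩
      refine ⟨emb w', ?_, ?_⟩
      · show Inew.Adj v (emb w')
        rw [hInewAdj]
        refine Or.inl ⟨hv, by rw [hembval]; exact w'.isLt, ?_⟩
        have hww : (⟨(emb w').val, by rw [hembval]; exact w'.isLt⟩ : Fin (n - 2)) = w' :=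
          Fin.ext (by rw [hembval])
        rw [hww]
        exact hw'
      · intro y hy
        rw [hInewAdj] at hy
        rcases hy with ⟨hv2, hy2, hadj⟩ | ⟨hvA, rfl⟩ | ⟨hvB, rfl⟩
        · have h3 := huni ⟨y.val, hy2⟩ hadj
          apply Fin.ext
          have h4 := congrArg Fin.val h3
          rw [hembval]
          exact h4
        · exfalso
          have h4 := congrArg Fin.val hvA
          rw [hAval] at h4
          omega
        · exfalso
          have h4 := congrArg Fin.val hvB
          rw [hBval] at h4
          omega
    · have hvlt := v.isLt
      have hvAB : v = A ∨ v = B := by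
        rcases Nat.lt_or_ge v.val (n - 1) with h | h
        · exact Or.inl (Fin.ext (by rw [hAval]; omega))
        · exact Or.inr (Fin.ext (by rw [hBval]; omega))
      rcases hvAB with rfl | rfl
      · refine ⟨B, ?_, ?_⟩
        · change Inew.Adj _ _
          rw [hInewAdj]; exact Or.inr (Or.inl ⟨rfl, rfl⟩)
        · intro y hy
          rw [hInewAdj] at hy
          rcases hy with ⟨h1, -, -⟩ | ⟨-, rfl⟩ | ⟨hBA, rfl⟩
          · exfalso
            rw [hAval] at h1
            omega
          · rfl
          · exact absurd hBA hABne
      · refine ⟨A, ?_, ?_⟩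
        · change Inew.Adj _ _
          rw [hInewAdj]; exact Or.inr (Or.inr ⟨rfl, rfl⟩)
        · intro y hy
          rw [hInewAdj] at hy
          rcases hy with ⟨h1, -, -⟩ | ⟨hBA, rfl⟩ | ⟨-, rfl⟩
          · exfalso
            rw [hBval] at h1
            omega
          · exact absurd hBA hBAne
          · rfl
  have hInewES : Inew.edgeSet = (Sym2.map emb '' I'.edgeSet) ∪ {s(A, B)} := by
    ext e
    induction e using Sym2.ind with
    | _ u v =>
      rw [Set.mem_union, SimpleGraph.Subgraph.mem_edgeSet, hInewAdj]
      constructor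
      · rintro (⟨hu, hv, hadj⟩ | ⟨rfl, rfl⟩ | ⟨rfl, rfl⟩)
        · left
          refine ⟨s(⟨u.val, hu⟩, (⟨v.val, hv⟩ : Fin (n - 2))),
            SimpleGraph.Subgraph.mem_edgeSet.mpr hadj, ?_⟩
          rw [Sym2.map_pair_eq, hembkey u hu, hembkey v hv]
        · right; rfl
        · right; exact Sym2.eq_swap
      · rintro (⟨e', he', hmap⟩ | h)
        · revert he' hmap
          induction e' using Sym2.ind with
          | _ a b =>
            intro he' hmap
            rw [SimpleGraph.Subgraph.mem_edgeSet] at he'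
            rw [Sym2.map_pair_eq, Sym2.eq_iff] at hmap
            rcases hmap with ⟨rfl, rfl⟩ | ⟨rfl, rfl⟩
            · refine Or.inl ⟨by rw [hembval]; exact a.isLt, by rw [hembval]; exact b.isLt, ?_⟩
              have ha : (⟨(emb a).val, by rw [hembval]; exact a.isLt⟩ : Fin (n - 2)) = a :=
                Fin.ext (by rw [hembval])
              have hb : (⟨(emb b).val, by rw [hembval]; exact b.isLt⟩ : Fin (n - 2)) = b :=
                Fin.ext (by rw [hembval])
              rw [ha, hb]
              exact he'
            · refine Or.inl ⟨by rw [hembval]; exact b.isLt, by rw [hembval]; exact a.isLt, ?_⟩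
              have ha : (⟨(emb a).val, by rw [hembval]; exact a.isLt⟩ : Fin (n - 2)) = a :=
                Fin.ext (by rw [hembval])
              have hb : (⟨(emb b).val, by rw [hembval]; exact b.isLt⟩ : Fin (n - 2)) = b :=
                Fin.ext (by rw [hembval])
              rw [ha, hb]
              exact he'.symm
        · rw [Set.mem_singleton_iff, Sym2.eq_iff] at h
          rcases h with ⟨rfl, rfl⟩ | ⟨rfl, rfl⟩
          · exact Or.inr (Or.inl ⟨rfl, rfl⟩)
          · exact Or.inr (Or.inr ⟨rfl, rfl⟩)
  -- the final family of cycles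
  obtain ⟨F, hFdef⟩ : ∃ F : Fin L.length → (⊤ : SimpleGraph (Fin n)).Subgraph,
      ∀ i, F i = if h : i.val < M.length + s then R ⟨i.val, by omega⟩
        else C ⟨i.val - (M.length + s), by have h2 := i.isLt; have h3 := hLlen; omega⟩ :=
    ⟨_, fun i => rfl⟩
  have hFold : ∀ (i : Fin L.length) (h : i.val < M.length + s) (h2 : i.val < M'.length),
      F i = R ⟨i.val, h2⟩ := by
    intro i h h2
    rw [hFdef i, dif_pos h]
  have hFnew : ∀ (i : Fin L.length) (h : ¬ i.val < M.length + s)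
      (h2 : i.val - (M.length + s) < s), F i = C ⟨i.val - (M.length + s), h2⟩ := by
    intro i h h2
    rw [hFdef i, dif_neg h]
  -- old indices are distinct from sIdx
  have holdne : ∀ (v : ℕ) (h : v < M.length + s) (h2 : v < M'.length),
      (⟨v, h2⟩ : Fin M'.length) ≠ sIdx := by
    intro v h h2 heq
    rw [hsIdxdef] at heq
    have h3 : v = M.length + s := congrArg Fin.val heq
    omega
  -- disjointness: mapped old cycle vs new five-cycle
  have hRCdisj : ∀ (j : Fin M'.length), j ≠ sIdx → ∀ t : Fin s,
      Disjoint (Sym2.map emb '' (g j).edgeSet) ((C t).edgeSet) := by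
    intro j hj t
    rw [Set.disjoint_left]
    rintro e ⟨e', he', rfl⟩ he2
    rw [hCedge] at he2
    simp only [Set.mem_insert_iff, Set.mem_singleton_iff] at he2
    revert he'
    induction e' using Sym2.ind with
    | _ a b =>
      intro he'
      rw [Sym2.map_pair_eq] at he2
      rcases he2 with h | h | h | h | h <;> rw [Sym2.eq_iff] at h
      · rcases h with ⟨h1, -⟩ | ⟨-, h2⟩
        · exact hembA a h1
        · exact hembA b h2
      · rcases h with ⟨h1, h2⟩ | ⟨h1, h2⟩
        · rw [hexap] at h1 h2
          have ha : a = x t := hembinj h1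
          have hb : b = x (t + 1) := hembinj h2
          subst ha; subst hb
          have hmem : s(x t, x (t + 1)) ∈ (g sIdx).edgeSet := by
            rw [hxedge]; exact ⟨t, rfl⟩
          exact Set.disjoint_left.mp (hgdisj j sIdx hj) he' hmem
        · rw [hexap] at h1 h2
          have ha : a = x (t + 1) := hembinj h1
          have hb : b = x t := hembinj h2
          subst ha; subst hb
          have hmem : s(x (t + 1), x t) ∈ (g sIdx).edgeSet := by
            rw [Sym2.eq_swap, hxedge]
            exact ⟨t, rfl⟩
          exact Set.disjoint_left.mp (hgdisj j sIdx hj) he' hmem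
      · rcases h with ⟨-, h2⟩ | ⟨h1, -⟩
        · exact hembB b h2
        · exact hembB a h1
      · rcases h with ⟨h1, -⟩ | ⟨-, h2⟩
        · exact hembB a h1
        · exact hembB b h2
      · rcases h with ⟨-, h2⟩ | ⟨h1, -⟩
        · exact hembA b h2
        · exact hembA a h1
  -- disjointness: new five-cycles pairwise
  have hCCdisj : ∀ t r : Fin s, t ≠ r → Disjoint ((C t).edgeSet) ((C r).edgeSet) := by
    intro t r htr
    rw [Set.disjoint_left]
    intro e he1 he2
    rw [hCedge] at he1 he2
    simp only [Set.mem_insert_iff, Set.mem_singleton_iff] at he1 he2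
    rcases he1 with rfl | rfl | rfl | rfl | rfl <;>
      rcases he2 with h | h | h | h | h <;>
      rw [Sym2.eq_iff] at h <;>
      rcases h with ⟨h1, h2⟩ | ⟨h1, h2⟩ <;>
      first
        | exact hAex _ h1
        | exact hAex _ h2
        | exact hexA _ h1
        | exact hexA _ h2
        | exact hAez _ h1
        | exact hAez _ h2
        | exact hezA _ h1
        | exact hezA _ h2
        | exact hBex _ h1
        | exact hBex _ h2
        | exact hexB _ h1
        | exact hexB _ h2
        | exact hBez _ h1
        | exact hBez _ h2
        | exact hezB _ h1
        | exact hezB _ h2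
        | exact hexez _ _ h1
        | exact hexez _ _ h2
        | exact hezex _ _ h1
        | exact hezex _ _ h2
        | exact hABne h1
        | exact hABne h2
        | exact hBAne h1
        | exact hBAne h2
        | exact htr (hexinj h1)
        | exact htr (hexinj h2)
        | exact htr (hezinj h1)
        | exact htr (hezinj h2)
        | exact htr (add_right_cancel (hexinj h1))
        | exact htr (add_right_cancel (hexinj h2))
        | exact fin_no_swap hs3 (hexinj h1) ((hexinj h2).symm)
        | exact fin_no_swap hs3 ((hexinj h2).symm) (hexinj h1)
  -- disjointness: new five-cycle vs matching
  have hCIdisj : ∀ t, Disjoint ((C t).edgeSet) Inew.edgeSet := by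
    intro t
    rw [Set.disjoint_left]
    intro e he1 he2
    rw [hInewES] at he2
    rcases he2 with ⟨e', he', hmape⟩ | he2
    · revert he' hmape
      induction e' using Sym2.ind with
      | _ a b =>
        intro he' hmape
        subst hmape
        rw [hCedge] at he1
        simp only [Set.mem_insert_iff, Set.mem_singleton_iff] at he1
        rw [Sym2.map_pair_eq] at he1
        rcases he1 with h | h | h | h | h <;> rw [Sym2.eq_iff] at h
        · rcases h with ⟨h1, -⟩ | ⟨-, h2⟩
          · exact hembA a h1
          · exact hembA b h2
        · rcases h with ⟨h1, h2⟩ | ⟨h1, h2⟩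
          · rw [hexap] at h1 h2
            have ha : a = x t := hembinj h1
            have hb : b = x (t + 1) := hembinj h2
            subst ha; subst hb
            have hmem : s(x t, x (t + 1)) ∈ (g sIdx).edgeSet := by
              rw [hxedge]; exact ⟨t, rfl⟩
            exact Set.disjoint_left.mp (hgI sIdx) hmem he'
          · rw [hexap] at h1 h2
            have ha : a = x (t + 1) := hembinj h1
            have hb : b = x t := hembinj h2
            subst ha; subst hb
            have hmem : s(x (t + 1), x t) ∈ (g sIdx).edgeSet := by
              rw [Sym2.eq_swap, hxedge]
              exact ⟨t, rfl⟩
            exact Set.disjoint_left.mp (hgI sIdx) hmem he'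
        · rcases h with ⟨-, h2⟩ | ⟨h1, -⟩
          · exact hembB b h2
          · exact hembB a h1
        · rcases h with ⟨h1, -⟩ | ⟨-, h2⟩
          · exact hembB a h1
          · exact hembB b h2
        · rcases h with ⟨-, h2⟩ | ⟨h1, -⟩
          · exact hembA b h2
          · exact hembA a h1
    · rw [Set.mem_singleton_iff] at he2
      subst he2
      rw [hCedge] at he1
      simp only [Set.mem_insert_iff, Set.mem_singleton_iff] at he1
      rcases he1 with h | h | h | h | h <;> rw [Sym2.eq_iff] at h <;>
        rcases h with ⟨h1, h2⟩ | ⟨h1, h2⟩ <;>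
        first
          | exact hBex _ h2
          | exact hAex _ h2
          | exact hexA _ h1
          | exact hexB _ h1
          | exact hBAne h2
          | exact hABne h2
          | exact hexA _ h2
          | exact hexB _ h2
          | exact hBez _ h2
          | exact hAez _ h2
          | exact hezA _ h1
          | exact hezB _ h1
          | exact hABne h1
          | exact hBAne h1
          | exact hBex _ h1
          | exact hAex _ h1
          | exact hAez _ h1
          | exact hBez _ h1
          | exact hAex _ h1.symm
          | exact hAez _ h1.symm
          | exact hBex _ h1.symm
          | exact hBez _ h1.symm
          | exact hAex _ h2.symm
          | exact hAez _ h2.symm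
          | exact hBex _ h2.symm
          | exact hBez _ h2.symm
          | exact hABne h1.symm
          | exact hABne h2.symm
          | exact hBAne h1.symm
          | exact hBAne h2.symm
  -- disjointness: mapped old cycle vs matching
  have hRIdisj : ∀ j : Fin M'.length, Disjoint (Sym2.map emb '' (g j).edgeSet) Inew.edgeSet := by
    intro j
    rw [Set.disjoint_left]
    rintro e ⟨e', he', rfl⟩ he2
    rw [hInewES] at he2
    rcases he2 with ⟨e2, he2, hmape⟩ | he2
    · have heq : e2 = e' := Sym2.map.injective hembinj hmape
      subst heq
      exact Set.disjoint_left.mp (hgI j) he' he2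
    · rw [Set.mem_singleton_iff] at he2
      revert he' he2
      induction e' using Sym2.ind with
      | _ a b =>
        intro he' he2
        rw [Sym2.map_pair_eq, Sym2.eq_iff] at he2
        rcases he2 with ⟨h1, -⟩ | ⟨-, h2⟩
        · exact hembA a h1
        · exact hembA b h2
  -- membership helpers for the union
  have hFC : ∀ t : Fin s, (C t).edgeSet ⊆ ⋃ i, (F i).edgeSet := by
    intro t e' he'
    have hidx : M.length + s + t.val < L.length := by
      rw [hLlen]
      have := t.isLt
      omega
    refine Set.mem_iUnion.mpr ⟨⟨M.length + s + t.val, hidx⟩, ?_⟩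
    have h2 : M.length + s + t.val - (M.length + s) < s := by
      have := t.isLt; omega
    rw [hFnew ⟨M.length + s + t.val, hidx⟩
      (by show ¬ M.length + s + t.val < M.length + s; omega) h2]
    have h3 : (⟨M.length + s + t.val - (M.length + s), h2⟩ : Fin s) = t :=
      Fin.ext (show M.length + s + t.val - (M.length + s) = t.val by omega)
    rw [h3]
    exact he'
  have hFR : ∀ (j : Fin M'.length), j ≠ sIdx →
      Sym2.map emb '' (g j).edgeSet ⊆ ⋃ i, (F i).edgeSet := by
    intro j hj e' he'
    have hjlt : j.val < M.length + s := by
      have h1 := j.isLt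
      have h1' := hM'len
      rcases Nat.lt_or_ge j.val (M.length + s) with h | h
      · exact h
      · exfalso
        apply hj
        rw [hsIdxdef]
        exact Fin.ext (show j.val = M.length + s by omega)
    have hidx : j.val < L.length := by rw [hLlen]; omega
    refine Set.mem_iUnion.mpr ⟨⟨j.val, hidx⟩, ?_⟩
    rw [hFold ⟨j.val, hidx⟩ hjlt j.isLt]
    have h3 : (⟨j.val, j.isLt⟩ : Fin M'.length) = j := Fin.ext rfl
    rw [h3, hRedge]
    exact he'
  -- the cross edges
  have hcross : ∀ (u v : Fin n), u.val < n - 2 → n - 2 ≤ v.val →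
      s(u, v) ∈ (⋃ i, (F i).edgeSet) ∪ Inew.edgeSet := by
    intro u v hu hv
    have hvlt := v.isLt
    have hvAB : v = A ∨ v = B := by
      rcases Nat.lt_or_ge v.val (n - 1) with h | h
      · exact Or.inl (Fin.ext (by rw [hAval]; omega))
      · exact Or.inr (Fin.ext (by rw [hBval]; omega))
    have hekey : emb ⟨u.val, hu⟩ = u := Fin.ext (by rw [hembval])
    by_cases hxu : ∃ t, x t = ⟨u.val, hu⟩
    · obtain ⟨t, ht⟩ := hxu
      have hext : ex t = u := by rw [hexap, ht]; exact hekey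
      rcases hvAB with rfl | rfl
      · apply Set.mem_union_left
        apply hFC t
        rw [hCedge]
        left
        rw [← hext, Sym2.eq_swap]
      · apply Set.mem_union_left
        apply hFC (t - 1)
        rw [hCedge]
        right; right; left
        rw [sub_add_cancel, hext]
    · push_neg at hxu
      obtain ⟨t, ht⟩ := hzsurj ⟨u.val, hu⟩ (fun a h => hxu a h.symm)
      have hezt : ez t = u := by rw [hezap, ht]; exact hekey
      rcases hvAB with rfl | rfl
      · apply Set.mem_union_left
        apply hFC t
        rw [hCedge]
        right; right; right; right
        rw [hezt]
        exact rfl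
      · apply Set.mem_union_left
        apply hFC t
        rw [hCedge]
        right; right; right; left
        rw [← hezt, Sym2.eq_swap]
  -- assemble the decomposition
  refine Or.inr ⟨heven, F, Inew, hInewpm, ?_, ?_, ?_, ?_⟩
  · -- cycle lengths
    intro i
    by_cases h : i.val < M.length + s
    · have h2 : i.val < M'.length := by omega
      rw [hFold i h h2]
      have hval : L.get i = M'.get ⟨i.val, h2⟩ := by
        rw [List.get_eq_getElem, List.get_eq_getElem]
        exact hgeteq i.val h i.isLt h2
      rw [hval]
      exact hRcyc ⟨i.val, h2⟩
    · have h2 : i.val - (M.length + s) < s := by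
        have := i.isLt; have h3' := hLlen; omega
      rw [hFnew i h h2]
      have hval : L.get i = 5 := by
        rw [List.get_eq_getElem]
        exact hget5 i.val (by omega) i.isLt
      rw [hval]
      exact hCcyc _
  · -- pairwise disjoint
    intro i j hij
    by_cases hi : i.val < M.length + s <;> by_cases hj : j.val < M.length + s
    · have hi2 : i.val < M'.length := by omega
      have hj2 : j.val < M'.length := by omega
      rw [hFold i hi hi2, hFold j hj hj2, hRedge, hRedge]
      apply himgdisj
      apply hgdisj
      intro heq
      have h5 : i.val = j.val := by simpa using congrArg Fin.val heq
      exact hij (Fin.ext h5)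
    · have hi2 : i.val < M'.length := by omega
      have hj2 : j.val - (M.length + s) < s := by
        have := j.isLt; have h3' := hLlen; omega
      rw [hFold i hi hi2, hFnew j hj hj2, hRedge]
      exact hRCdisj _ (holdne i.val hi hi2) _
    · have hi2 : i.val - (M.length + s) < s := by
        have := i.isLt; have h3' := hLlen; omega
      have hj2 : j.val < M'.length := by omega
      rw [hFnew i hi hi2, hFold j hj hj2, hRedge]
      exact (hRCdisj _ (holdne j.val hj hj2) _).symm
    · have hi2 : i.val - (M.length + s) < s := by
        have := i.isLt; have h3' := hLlen; omega
      have hj2 : j.val - (M.length + s) < s := by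
        have := j.isLt; have h3' := hLlen; omega
      rw [hFnew i hi hi2, hFnew j hj hj2]
      apply hCCdisj
      intro heq
      apply hij
      have h4 : i.val - (M.length + s) = j.val - (M.length + s) := congrArg Fin.val heq
      exact Fin.ext (by omega)
  · -- cycles disjoint from the matching
    intro i
    by_cases h : i.val < M.length + s
    · have h2 : i.val < M'.length := by omega
      rw [hFold i h h2, hRedge]
      exact hRIdisj _
    · have h2 : i.val - (M.length + s) < s := by
        have := i.isLt; have h3' := hLlen; omega
      rw [hFnew i h h2]
      exact hCIdisj _
  · -- the union is everything
    apply subset_antisymm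
    · apply Set.union_subset
      · exact Set.iUnion_subset fun i => SimpleGraph.Subgraph.edgeSet_subset (F i)
      · exact SimpleGraph.Subgraph.edgeSet_subset Inew
    · intro e
      induction e using Sym2.ind with
      | _ u v =>
        intro he
        rw [SimpleGraph.mem_edgeSet, SimpleGraph.top_adj] at he
        rcases Nat.lt_or_ge u.val (n - 2) with hu | hu <;>
          rcases Nat.lt_or_ge v.val (n - 2) with hv | hv
        · -- both old vertices
          have hadj' : (⊤ : SimpleGraph (Fin (n - 2))).Adj ⟨u.val, hu⟩ ⟨v.val, hv⟩ := by
            rw [SimpleGraph.top_adj]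
            intro h
            have h5 : u.val = v.val := by simpa using congrArg Fin.val h
            exact he (Fin.ext h5)
          have hmem' : s(⟨u.val, hu⟩, (⟨v.val, hv⟩ : Fin (n - 2))) ∈
              (⊤ : SimpleGraph (Fin (n - 2))).edgeSet := hadj'
          rw [← hgunion] at hmem'
          have hemb_uv : Sym2.map emb s(⟨u.val, hu⟩, (⟨v.val, hv⟩ : Fin (n - 2))) = s(u, v) := by
            rw [Sym2.map_pair_eq, hembkey u hu, hembkey v hv]
          rcases hmem' with hmem' | hmem'
          · rw [Set.mem_iUnion] at hmem'
            obtain ⟨j, hj⟩ := hmem'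
            by_cases hjs : j = sIdx
            · subst hjs
              rw [hxedge] at hj
              obtain ⟨t, ht⟩ := hj
              have ht' : s(x t, x (t + 1)) = s(⟨u.val, hu⟩, (⟨v.val, hv⟩ : Fin (n - 2))) := ht
              apply Set.mem_union_left
              apply hFC t
              rw [hCedge]
              right; left
              rw [← hemb_uv, ← ht', Sym2.map_pair_eq, hexap, hexap]
            · apply Set.mem_union_left
              apply hFR j hjs
              exact ⟨_, hj, hemb_uv⟩
          · apply Set.mem_union_right
            rw [hInewES]
            exact Or.inl ⟨_, hmem', hemb_uv⟩
        · exact hcross u v hu hv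
        · rw [Sym2.eq_swap]
          exact hcross v u hv hu
        · -- both new vertices
          have hult := u.isLt
          have hvlt := v.isLt
          apply Set.mem_union_right
          rw [hInewES]
          right
          rw [Set.mem_singleton_iff]
          have hne : u.val ≠ v.val := fun hh => he (Fin.ext hh)
          rcases Nat.lt_or_ge u.val (n - 1) with h1 | h1
          · have huA : u = A := Fin.ext (by rw [hAval]; omega)
            have hvB : v = B := Fin.ext (by rw [hBval]; omega)
            rw [huA, hvB]
          · have huB : u = B := Fin.ext (by rw [hBval]; omega)
            have hvA : v = A := Fin.ext (by rw [hAval]; omega)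
            rw [huB, hvA, Sym2.eq_swap]
end

section
/- Every finite graph in which every vertex has even degree has a decomposition into cycles such that any two distinct cycles in the decomposition share at most two vertices. -/
open SimpleGraph

/-- A subgraph is a cycle: it is connected and every vertex of it has exactly two
neighbours in it. -/
def IsCycleSubgraph {V : Type*} {G : SimpleGraph V} (H : G.Subgraph) : Prop :=
  H.coe.Connected ∧ ∀ v ∈ H.verts, (H.neighborSet v).ncard = 2

namespace CycDecomp

open SimpleGraph Walk

variable {V : Type*} {G : SimpleGraph V} {a b c u v x y : V}

lemma nbr_empty_of_not_mem_support (p : G.Walk a b) (hx : x ∉ p.support) :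
    p.toSubgraph.neighborSet x = ∅ := by
  ext y
  simp only [Set.mem_empty_iff_false, iff_false, SimpleGraph.Subgraph.mem_neighborSet]
  intro h
  exact hx ((p.mem_verts_toSubgraph).mp h.fst_mem)

lemma path_nbr [DecidableEq V] (p : G.Walk a b) (hp : p.IsPath) :
    (∀ x ∈ p.support, x ≠ a → x ≠ b → (p.toSubgraph.neighborSet x).ncard = 2)
    ∧ (¬ p.Nil → p.toSubgraph.neighborSet a = {p.getVert 1})
    ∧ (¬ p.Nil → p.toSubgraph.neighborSet b = {p.getVert (p.length - 1)}) := by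
  induction p with
  | nil =>
    refine ⟨?_, ?_, ?_⟩
    · intro x hx hxa _
      simp only [support_nil, List.mem_singleton] at hx
      exact absurd hx hxa
    · intro h; exact absurd Walk.nil_nil h
    · intro h; exact absurd Walk.nil_nil h
  | @cons a c b h r ih =>
    have hr : r.IsPath := ((Walk.cons_isPath_iff h r).mp hp).1
    have ha : a ∉ r.support := ((Walk.cons_isPath_iff h r).mp hp).2
    obtain ⟨ih1, ih2, ih3⟩ := ih hr
    have hnbr : ∀ x, (Walk.cons h r).toSubgraph.neighborSet x
        = (G.subgraphOfAdj h).neighborSet x ∪ r.toSubgraph.neighborSet x := by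
      intro x; rw [Walk.toSubgraph, Subgraph.neighborSet_sup]
    by_cases hnil : r.Nil
    · have hcb : c = b := hnil.eq
      subst hcb
      have hrnil : r = Walk.nil := hnil.eq_nil
      subst hrnil
      have hac : a ≠ c := h.ne
      refine ⟨?_, ?_, ?_⟩
      · intro x hx hxa hxb
        simp only [support_cons, support_nil, List.mem_cons, List.mem_singleton] at hx
        rcases hx with h' | h' | h'
        · exact absurd h' hxa
        · exact absurd h' hxb
        · exact absurd h' List.not_mem_nil
      · intro _
        rw [hnbr, neighborSet_subgraphOfAdj, if_pos rfl, if_neg hac,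
          Walk.toSubgraph, neighborSet_singletonSubgraph, Set.union_empty, Set.union_empty]
        rfl
      · intro _
        rw [hnbr, neighborSet_subgraphOfAdj, if_neg (Ne.symm hac), if_pos rfl,
          Walk.toSubgraph, neighborSet_singletonSubgraph, Set.union_empty, Set.empty_union]
        rfl
    · have hcb : c ≠ b := by
        intro hcbe
        subst hcbe
        exact hnil ((Walk.isPath_iff_eq_nil (p := r)).mp hr ▸ Walk.nil_nil)
      have hab : a ≠ b := fun hab => ha (hab ▸ r.end_mem_support)
      have hac : a ≠ c := h.ne
      have hlen : 0 < r.length := by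
        rwa [Walk.not_nil_iff_lt_length] at hnil
      refine ⟨?_, ?_, ?_⟩
      · intro x hx hxa hxb
        have hxr : x ∈ r.support := by
          rw [Walk.support_cons] at hx
          rcases List.mem_cons.mp hx with h' | h'
          · exact absurd h' hxa
          · exact h'
        rw [hnbr]
        by_cases hxc : x = c
        · subst hxc
          rw [neighborSet_subgraphOfAdj, if_neg hxa, if_pos rfl, Set.empty_union,
            ih2 hnil]
          have hmem : r.getVert 1 ∈ r.support :=
            Walk.mem_support_iff_exists_getVert.mpr ⟨1, rfl, hlen⟩
          have hane : r.getVert 1 ≠ a := fun h' => ha (h' ▸ hmem)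
          rw [Set.union_comm, Set.union_singleton]
          exact Set.ncard_pair hane.symm
        · rw [neighborSet_subgraphOfAdj, if_neg hxa, if_neg hxc, Set.empty_union,
            Set.empty_union]
          exact ih1 x hxr hxc hxb
      · intro _
        rw [hnbr, neighborSet_subgraphOfAdj, if_pos rfl, if_neg hac,
          nbr_empty_of_not_mem_support r ha, Set.union_empty, Set.union_empty]
        exact congrArg _ (Walk.snd_cons r h).symm
      · intro _
        rw [hnbr, neighborSet_subgraphOfAdj, if_neg (Ne.symm hab), if_neg (Ne.symm hcb),
          Set.empty_union, Set.empty_union, ih3 hnil]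
        have hgv : (Walk.cons h r).getVert ((Walk.cons h r).length - 1)
            = r.getVert (r.length - 1) := by
          rw [Walk.length_cons, Nat.add_sub_cancel, Walk.getVert_cons r h (by omega)]
        rw [hgv]

lemma cycle_start_nbr [DecidableEq V] (p : G.Walk u u) (hp : p.IsCycle) :
    (p.toSubgraph.neighborSet u).ncard = 2 := by
  cases p with
  | nil => exact absurd hp (Walk.IsCycle.not_of_nil)
  | @cons _ c _ h r =>
    obtain ⟨hr, he⟩ := (Walk.cons_isCycle_iff r h).mp hp
    have hnil : ¬ r.Nil := Walk.not_nil_of_ne (Ne.symm h.ne)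
    obtain ⟨_, _, ih3⟩ := path_nbr r hr
    have hnbr : (Walk.cons h r).toSubgraph.neighborSet u
        = (G.subgraphOfAdj h).neighborSet u ∪ r.toSubgraph.neighborSet u := by
      rw [Walk.toSubgraph, Subgraph.neighborSet_sup]
    rw [hnbr, neighborSet_subgraphOfAdj, if_pos rfl, if_neg h.ne, Set.union_empty,
      ih3 hnil]
    have hadj : r.toSubgraph.Adj u (r.getVert (r.length - 1)) := by
      have : r.getVert (r.length - 1) ∈ r.toSubgraph.neighborSet u := by
        rw [ih3 hnil]; rfl
      exact this
    have hne : c ≠ r.getVert (r.length - 1) := by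
      intro hEq
      apply he
      have : s(u, r.getVert (r.length - 1)) ∈ r.toSubgraph.edgeSet :=
        Subgraph.mem_edgeSet.mpr hadj
      rw [Walk.mem_edges_toSubgraph] at this
      rw [← hEq] at this
      exact this
    rw [Set.union_comm, Set.union_singleton]
    exact Set.ncard_pair hne

lemma cycle_nbr [DecidableEq V] (p : G.Walk u u) (hp : p.IsCycle) (hx : x ∈ p.support) :
    (p.toSubgraph.neighborSet x).ncard = 2 := by
  have h1 : (p.rotate x hx).toSubgraph = p.toSubgraph := p.toSubgraph_rotate hx
  rw [← h1]
  exact cycle_start_nbr (p.rotate x hx) (hp.rotate hx)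

lemma isCycleSubgraph_toSubgraph (p : G.Walk u u) (hp : p.IsCycle) :
    IsCycleSubgraph p.toSubgraph := by
  classical
  refine ⟨p.toSubgraph_connected, fun v hv => ?_⟩
  exact cycle_nbr p hp ((p.mem_verts_toSubgraph).mp hv)


lemma edge_at_endpoint (p : G.Walk a b) (hp : p.IsPath) {w : V}
    (hw : s(b, w) ∈ p.edges) : w = p.getVert (p.length - 1) := by
  induction p with
  | nil => simp at hw
  | @cons a c b h r ih =>
    have hr : r.IsPath := ((Walk.cons_isPath_iff h r).mp hp).1
    have ha : a ∉ r.support := ((Walk.cons_isPath_iff h r).mp hp).2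
    rw [Walk.edges_cons, List.mem_cons] at hw
    rcases hw with hw | hw
    · rw [Sym2.eq_iff] at hw
      rcases hw with ⟨hba, hwc⟩ | ⟨hbc, hwa⟩
      · exact absurd hba.symm (fun h' => ha (h' ▸ r.end_mem_support))
      · subst hbc
        have hrnil : r = Walk.nil := (Walk.isPath_iff_eq_nil (p := r)).mp hr
        subst hrnil
        simpa using hwa
    · have hnil : ¬ r.Nil := by
        intro hnil
        rw [Walk.nil_iff_length_eq] at hnil
        have hel : r.edges = [] :=
          List.eq_nil_of_length_eq_zero (by rw [r.length_edges, hnil])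
        rw [hel] at hw
        simp at hw
      have hlen : 0 < r.length := (Walk.not_nil_iff_lt_length).mp hnil
      have := ih hr hw
      rw [this, Walk.length_cons, Nat.add_sub_cancel, Walk.getVert_cons r h (by omega)]

lemma exists_leaf [Fintype V] {W : SimpleGraph V} (hac : W.IsAcyclic)
    (hadj : W.Adj x y) : ∃ v w, W.neighborSet v = {w} := by
  classical
  set S : Set ℕ := {n | ∃ (u' v' : V) (p : W.Walk u' v'), p.IsPath ∧ p.length = n} with hSdef
  have hS1 : 1 ∈ S := by
    refine ⟨x, y, Walk.cons hadj Walk.nil, ?_, rfl⟩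
    rw [Walk.cons_isPath_iff]
    exact ⟨Walk.IsPath.nil, by simpa using hadj.ne⟩
  have hbdd : BddAbove S := by
    refine ⟨Fintype.card V, fun n hn => ?_⟩
    obtain ⟨u', v', p, hp, hlen⟩ := hn
    exact le_of_lt (hlen ▸ hp.length_lt)
  obtain ⟨u', v', p, hp, hlen⟩ := Nat.sSup_mem ⟨1, hS1⟩ hbdd
  have hN1 : 1 ≤ sSup S := le_csSup hbdd hS1
  have hnil : ¬ p.Nil := by
    rw [Walk.not_nil_iff_lt_length]; omega
  refine ⟨v', p.getVert (p.length - 1), ?_⟩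
  ext w'
  simp only [mem_neighborSet, Set.mem_singleton_iff]
  constructor
  · intro hw'
    by_contra hne
    by_cases hmem : w' ∈ p.support
    · have hr := hp.dropUntil hmem
      have he : s(v', w') ∉ (p.dropUntil w' hmem).edges := by
        intro hee
        exact hne (edge_at_endpoint p hp (p.edges_dropUntil_subset hmem hee))
      exact hac _ ((Walk.cons_isCycle_iff _ hw').mpr ⟨hr, he⟩)
    · have hq : (Walk.cons hw'.symm p.reverse).IsPath := by
        rw [Walk.cons_isPath_iff]
        exact ⟨hp.reverse, by rwa [Walk.support_reverse, List.mem_reverse]⟩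
      have : p.length + 1 ∈ S := ⟨_, _, _, hq, by simp⟩
      have := le_csSup hbdd this
      omega
  · intro hw'
    subst hw'
    have := Walk.adj_snd (p := p.reverse) (by
      rw [Walk.not_nil_iff_lt_length, Walk.length_reverse]; omega)
    rwa [Walk.snd_reverse] at this
    
lemma isAcyclic_anti {W W' : SimpleGraph V} (h : W' ≤ W) (hac : W.IsAcyclic) :
    W'.IsAcyclic := fun _ c hc => hac (c.mapLe h) (hc.mapLe h)

lemma forest_bound [Fintype V] :
    ∀ (n : ℕ) (W : SimpleGraph V), W.IsAcyclic → W.edgeSet.ncard = n →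
      W.edgeSet.Nonempty → n + 1 ≤ W.support.ncard := by
  intro n
  induction n using Nat.strong_induction_on with
  | _ n ih =>
  intro W hac hcard hne
  classical
  obtain ⟨e, he⟩ := hne
  induction e using Sym2.ind with
  | _ x y =>
  have hxy : W.Adj x y := (mem_edgeSet W).mp he
  obtain ⟨v, w, hnbr⟩ := exists_leaf hac hxy
  have hvw : W.Adj v w := by
    have : w ∈ W.neighborSet v := by rw [hnbr]; rfl
    exact this
  set e0 : Sym2 V := s(v, w) with he0
  have he0mem : e0 ∈ W.edgeSet := hvw
  have hn1 : 1 ≤ n := by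
    have : 0 < W.edgeSet.ncard := (Set.ncard_pos (Set.toFinite _)).mpr ⟨e0, he0mem⟩
    omega
  set W' := W.deleteEdges {e0} with hW'def
  have hle : W' ≤ W := deleteEdges_le _
  have hac' : W'.IsAcyclic := isAcyclic_anti hle hac
  have hEs : W'.edgeSet = W.edgeSet \ {e0} := edgeSet_deleteEdges _
  have hcard' : W'.edgeSet.ncard = n - 1 := by
    rw [hEs, Set.ncard_diff_singleton_of_mem he0mem, hcard]
  have hsupsub : W'.support ⊆ W.support \ {v} := by
    intro z hz
    obtain ⟨z', hz'⟩ := hz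
    change W'.Adj z z' at hz'
    rw [deleteEdges_adj] at hz'
    refine ⟨⟨z', hz'.1⟩, ?_⟩
    simp only [Set.mem_singleton_iff]
    intro hzv
    subst hzv
    have : z' ∈ W.neighborSet z := hz'.1
    rw [hnbr] at this
    exact hz'.2 (by rw [this]; rfl)
  have hvsup : v ∈ W.support := ⟨w, hvw⟩
  have hsupfin : W.support.Finite := Set.toFinite _
  have hsupcard : (W.support \ {v}).ncard = W.support.ncard - 1 :=
    Set.ncard_diff_singleton_of_mem hvsup
  have hsuppos : 1 ≤ W.support.ncard := (Set.ncard_pos (Set.toFinite _)).mpr ⟨v, hvsup⟩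
  rcases Set.eq_empty_or_nonempty W'.edgeSet with hW'e | hW'ne
  · have hn : n = 1 := by
      have := hcard'
      rw [hW'e] at this
      simp [Set.ncard_empty] at this
      omega
    have hpair : ({v, w} : Set V) ⊆ W.support := by
      rintro z (rfl | rfl)
      · exact hvsup
      · exact ⟨v, hvw.symm⟩
    have : ({v, w} : Set V).ncard ≤ W.support.ncard :=
      Set.ncard_le_ncard hpair hsupfin
    rw [Set.ncard_pair hvw.ne] at this
    omega
  · have hlt : n - 1 < n := by omega
    have := ih (n - 1) hlt W' hac' hcard' hW'ne
    have hle2 : W'.support.ncard ≤ (W.support \ {v}).ncard :=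
      Set.ncard_le_ncard hsupsub hsupfin.diff
    omega

lemma exists_cycle_in_even [Fintype V] {W : SimpleGraph V}
    (heven : ∀ v, Even ((W.neighborSet v).ncard))
    (hne : W.edgeSet.Nonempty) : ∃ (u : V) (p : W.Walk u u), p.IsCycle := by
  by_contra hcon
  push_neg at hcon
  have hac : W.IsAcyclic := fun v c hc => hcon v c hc
  obtain ⟨e, he⟩ := hne
  induction e using Sym2.ind with
  | _ x y =>
  obtain ⟨v, w, hnbr⟩ := exists_leaf hac ((mem_edgeSet W).mp he)
  have := heven v
  rw [hnbr, Set.ncard_singleton] at this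
  exact (Nat.not_even_iff.mpr rfl) this


section Part3
variable [Fintype V]

lemma handshake_cycle (H : G.Subgraph)
    (hH : ∀ v ∈ H.verts, (H.neighborSet v).ncard = 2) :
    H.edgeSet.ncard = H.verts.ncard := by
  classical
  have hsum := SimpleGraph.sum_degrees_eq_twice_card_edges H.spanningCoe
  have hdeg : ∀ v : V, H.spanningCoe.degree v = (H.neighborSet v).ncard := by
    intro v
    have h1 : H.spanningCoe.neighborSet v = H.neighborSet v := rfl
    rw [← h1, ← card_neighborSet_eq_degree, Set.ncard_eq_toFinset_card', Set.toFinset_card]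
  have hzero : ∀ v : V, v ∉ H.verts → H.spanningCoe.degree v = 0 := by
    intro v hv
    rw [hdeg]
    have : H.neighborSet v = ∅ := by
      ext w
      simp only [Set.mem_empty_iff_false, iff_false, Subgraph.mem_neighborSet]
      exact fun h => hv h.fst_mem
    rw [this, Set.ncard_empty]
  have hsum2 : ∑ v : V, H.spanningCoe.degree v = 2 * H.verts.ncard := by
    rw [← Finset.sum_subset (Finset.subset_univ H.verts.toFinset)
      (fun x _ hx => hzero x (by simpa using hx))]
    have : ∀ v ∈ H.verts.toFinset, H.spanningCoe.degree v = 2 := by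
      intro v hv
      rw [hdeg]
      exact hH v (by simpa using hv)
    rw [Finset.sum_congr rfl this, Finset.sum_const, smul_eq_mul,
      Set.ncard_eq_toFinset_card', mul_comm]
  have h2 : H.spanningCoe.edgeSet = H.edgeSet := rfl
  have hedge : H.spanningCoe.edgeFinset.card = H.edgeSet.ncard := by
    rw [edgeFinset_card, ← h2, Set.ncard_eq_toFinset_card', Set.toFinset_card]
  omega

lemma cycle_edgeSet_nonempty {H : G.Subgraph} (hH : IsCycleSubgraph H) :
    H.edgeSet.Nonempty := by
  obtain ⟨v⟩ := hH.1.nonempty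
  have hv : (v : V) ∈ H.verts := v.2
  have h2 := hH.2 v hv
  have : (H.neighborSet (v : V)).Nonempty := by
    rw [← Set.ncard_pos (Set.toFinite _), h2]; omega
  obtain ⟨w, hw⟩ := this
  exact ⟨s(v, w), Subgraph.mem_edgeSet.mpr hw⟩

lemma cycle_three_le_verts {H : G.Subgraph} (hH : IsCycleSubgraph H) :
    3 ≤ H.verts.ncard := by
  obtain ⟨v⟩ := hH.1.nonempty
  have hv : (v : V) ∈ H.verts := v.2
  have h2 := hH.2 v hv
  obtain ⟨x, y, hxy, hpair⟩ := Set.ncard_eq_two.mp h2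
  have hx : H.Adj v x := by rw [← Subgraph.mem_neighborSet, hpair]; exact Set.mem_insert _ _
  have hy : H.Adj v y := by
    rw [← Subgraph.mem_neighborSet, hpair]; exact Set.mem_insert_iff.mpr (Or.inr rfl)
  have hsub : ({(v : V), x, y} : Set V) ⊆ H.verts := by
    rintro z (rfl | rfl | rfl)
    · exact hv
    · exact hx.snd_mem
    · exact hy.snd_mem
  have hvx : (v : V) ≠ x := hx.adj_sub.ne
  have hvy : (v : V) ≠ y := hy.adj_sub.ne
  have hcard : ({(v : V), x, y} : Set V).ncard = 3 := by
    rw [Set.ncard_insert_of_notMem (by simp [hvx, hvy]) (Set.toFinite _),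
      Set.ncard_pair hxy]
  rw [← hcard]
  exact Set.ncard_le_ncard hsub (Set.toFinite _)

lemma even_del {F : SimpleGraph V} (heven : ∀ v, Even ((F.neighborSet v).ncard))
    {Z : G.Subgraph} (hZ : ∀ v ∈ Z.verts, (Z.neighborSet v).ncard = 2)
    (hsub : Z.edgeSet ⊆ F.edgeSet) :
    ∀ v, Even (((F.deleteEdges Z.edgeSet).neighborSet v).ncard) := by
  intro v
  have hnbr : (F.deleteEdges Z.edgeSet).neighborSet v
      = F.neighborSet v \ Z.neighborSet v := by
    ext w
    simp only [mem_neighborSet, deleteEdges_adj, Set.mem_diff, Subgraph.mem_neighborSet]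
    rw [Subgraph.mem_edgeSet]
  have hZsubnbr : Z.neighborSet v ⊆ F.neighborSet v := by
    intro w hw
    exact (F.mem_edgeSet).mp (hsub (Subgraph.mem_edgeSet.mpr hw))
  rw [hnbr, Set.ncard_diff hZsubnbr (Set.toFinite _)]
  have hle : (Z.neighborSet v).ncard ≤ (F.neighborSet v).ncard :=
    Set.ncard_le_ncard hZsubnbr (Set.toFinite _)
  obtain ⟨k, hk⟩ := heven v
  by_cases hv : v ∈ Z.verts
  · rw [hZ v hv] at hle ⊢
    refine ⟨k - 1, by omega⟩
  · have : Z.neighborSet v = ∅ := by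
      ext w
      simp only [Set.mem_empty_iff_false, iff_false, Subgraph.mem_neighborSet]
      exact fun h => hv h.fst_mem
    rw [this, Set.ncard_empty]
    exact ⟨k, by omega⟩

theorem veblen (G : SimpleGraph V) :
    ∀ (n : ℕ) (F : SimpleGraph V), F ≤ G → F.edgeSet.ncard = n →
      (∀ v, Even ((F.neighborSet v).ncard)) →
      ∃ D : Finset G.Subgraph, (∀ H ∈ D, IsCycleSubgraph H) ∧
        (∀ H₁ ∈ D, ∀ H₂ ∈ D, H₁ ≠ H₂ → H₁.edgeSet ∩ H₂.edgeSet = ∅) ∧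
        (⋃ H ∈ D, Subgraph.edgeSet H) = F.edgeSet := by
  intro n
  induction n using Nat.strong_induction_on with
  | _ n ih =>
  intro F hFG hcard heven
  classical
  rcases Set.eq_empty_or_nonempty F.edgeSet with hFe | hFne
  · exact ⟨∅, by simp, by simp, by simp [hFe]⟩
  · obtain ⟨u, p, hp⟩ := exists_cycle_in_even heven hFne
    have hpe : ∀ e ∈ p.edges, e ∈ G.edgeSet :=
      fun e hee => (edgeSet_subset_edgeSet.mpr hFG) (p.edges_subset_edgeSet hee)
    set q := p.transfer G hpe with hqdef
    have hq : q.IsCycle := hp.transfer hpe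
    set Z := q.toSubgraph with hZdef
    have hZcyc : IsCycleSubgraph Z := isCycleSubgraph_toSubgraph q hq
    have hZedges : Z.edgeSet = {e | e ∈ p.edges} := by
      rw [hZdef, Walk.edgeSet_toSubgraph, Walk.edgeSet_transfer, Walk.edgeSet]
    have hZsub : Z.edgeSet ⊆ F.edgeSet := by
      rw [hZedges]
      exact fun e hee => p.edges_subset_edgeSet hee
    have hZne : Z.edgeSet.Nonempty := cycle_edgeSet_nonempty hZcyc
    set F' := F.deleteEdges Z.edgeSet with hF'def
    have heven' := even_del heven hZcyc.2 hZsub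
    have hle' : F' ≤ G := le_trans (deleteEdges_le _) hFG
    have hFe' : F'.edgeSet = F.edgeSet \ Z.edgeSet := edgeSet_deleteEdges _
    have hZpos : 0 < Z.edgeSet.ncard := (Set.ncard_pos (Set.toFinite _)).mpr hZne
    have hcard' : F'.edgeSet.ncard = n - Z.edgeSet.ncard := by
      rw [hFe', Set.ncard_diff hZsub (Set.toFinite _), hcard]
    have hnpos : 0 < n := by
      rw [← hcard]
      exact (Set.ncard_pos (Set.toFinite _)).mpr hFne
    have hlt : n - Z.edgeSet.ncard < n := by omega
    obtain ⟨D', hD'cyc, hD'disj, hD'un⟩ := ih _ hlt F' hle' hcard' heven'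
    have hsubun : ∀ H ∈ D', H.edgeSet ⊆ F'.edgeSet := by
      intro H hH
      rw [← hD'un]
      exact Set.subset_biUnion_of_mem hH
    have hZnotin : Z ∉ D' := by
      intro hZin
      obtain ⟨e, he⟩ := hZne
      have := hsubun Z hZin he
      rw [hFe'] at this
      exact this.2 he
    refine ⟨insert Z D', ?_, ?_, ?_⟩
    · intro H hH
      rcases Finset.mem_insert.mp hH with rfl | hH
      · exact hZcyc
      · exact hD'cyc H hH
    · intro H₁ h₁ H₂ h₂ hne
      rcases Finset.mem_insert.mp h₁ with rfl | h₁ <;>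
        rcases Finset.mem_insert.mp h₂ with rfl | h₂
      · exact absurd rfl hne
      · ext e
        simp only [Set.mem_inter_iff, Set.mem_empty_iff_false, iff_false, not_and]
        intro heZ heH
        have := hsubun H₂ h₂ heH
        rw [hFe'] at this
        exact this.2 heZ
      · ext e
        simp only [Set.mem_inter_iff, Set.mem_empty_iff_false, iff_false, not_and]
        intro heH heZ
        have := hsubun H₁ h₁ heH
        rw [hFe'] at this
        exact this.2 heZ
      · exact hD'disj H₁ h₁ H₂ h₂ hne
    · rw [Finset.set_biUnion_insert, hD'un, hFe', Set.union_diff_cancel hZsub]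

lemma two_cycles_at {F : SimpleGraph V} (D : Finset G.Subgraph)
    (hcyc : ∀ H ∈ D, IsCycleSubgraph H)
    (hun : (⋃ H ∈ D, Subgraph.edgeSet H) = F.edgeSet)
    (hc4 : (F.neighborSet c).ncard = 4) : 2 ≤ D.card := by
  classical
  have hnbrne : (F.neighborSet c).Nonempty := by
    rw [← Set.ncard_pos (Set.toFinite _), hc4]; omega
  obtain ⟨w, hw⟩ := hnbrne
  have hedge : s(c, w) ∈ F.edgeSet := hw
  rw [← hun] at hedge
  simp only [Set.mem_iUnion] at hedge
  obtain ⟨H, hH, hHe⟩ := hedge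
  by_contra hcon
  push_neg at hcon
  have hone : D.card ≤ 1 := by omega
  have hsingle : ∀ K ∈ D, K = H := by
    intro K hK
    by_contra hne
    have : 2 ≤ D.card := Finset.one_lt_card.mpr ⟨K, hK, H, hH, hne⟩
    omega
  have hsub : F.neighborSet c ⊆ H.neighborSet c := by
    intro z hz
    have : s(c, z) ∈ F.edgeSet := hz
    rw [← hun] at this
    simp only [Set.mem_iUnion] at this
    obtain ⟨K, hK, hKe⟩ := this
    rw [hsingle K hK] at hKe
    exact Subgraph.mem_edgeSet.mp hKe
  have hcH : c ∈ H.verts := (Subgraph.mem_edgeSet.mp hHe).fst_mem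
  have := hcyc H hH |>.2 c hcH
  have hle : (F.neighborSet c).ncard ≤ (H.neighborSet c).ncard :=
    Set.ncard_le_ncard hsub (Set.toFinite _)
  omega

end Part3

lemma subgraph_nbr_empty (H : G.Subgraph) (hv : v ∉ H.verts) :
    H.neighborSet v = ∅ := by
  ext w
  simp only [Set.mem_empty_iff_false, iff_false, Subgraph.mem_neighborSet]
  exact fun h => hv h.fst_mem


end CycDecomp

open CycDecomp

/-- Every finite even graph has a decomposition into cycles in which any
two distinct cycles share at most two vertices. -/
theorem even_graph_cycle_decomposition_sharing_at_most_two {V : Type*} [Fintype V]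
    (G : SimpleGraph V) (heven : ∀ v : V, Even (G.neighborSet v).ncard) :
    ∃ D : Set G.Subgraph,
      (∀ H ∈ D, IsCycleSubgraph H) ∧
      (∀ H₁ ∈ D, ∀ H₂ ∈ D, H₁ ≠ H₂ → Disjoint H₁.edgeSet H₂.edgeSet) ∧
      (⋃ H ∈ D, SimpleGraph.Subgraph.edgeSet H) = G.edgeSet ∧
      (∀ H₁ ∈ D, ∀ H₂ ∈ D, H₁ ≠ H₂ → (H₁.verts ∩ H₂.verts).ncard ≤ 2) := by
  classical
  set P : Finset G.Subgraph → Prop := fun D =>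
    (∀ H ∈ D, IsCycleSubgraph H) ∧
    (∀ H₁ ∈ D, ∀ H₂ ∈ D, H₁ ≠ H₂ → H₁.edgeSet ∩ H₂.edgeSet = ∅) ∧
    (⋃ H ∈ D, SimpleGraph.Subgraph.edgeSet H) = G.edgeSet with hPdef
  have hPex : ∃ D, P D := by
    obtain ⟨D, h1, h2, h3⟩ := veblen G G.edgeSet.ncard G le_rfl rfl heven
    exact ⟨D, h1, h2, h3⟩
  have hbdd : BddAbove {n | ∃ D, P D ∧ D.card = n} := by
    refine ⟨G.edgeFinset.card, ?_⟩
    rintro n ⟨D, hD, rfl⟩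
    rcases D.eq_empty_or_nonempty with rfl | ⟨H0, hH0⟩
    · simp
    · obtain ⟨e0, _⟩ := cycle_edgeSet_nonempty (hD.1 H0 hH0)
      refine Finset.card_le_card_of_injOn
        (fun H => if h : H.edgeSet.Nonempty then h.some else e0) ?_ ?_
      · intro H hH
        have hne := cycle_edgeSet_nonempty (hD.1 H hH)
        simp only [dif_pos hne]
        exact SimpleGraph.mem_edgeFinset.mpr (H.edgeSet_subset hne.some_mem)
      · intro H₁ h₁ H₂ h₂ hfe
        by_contra hne
        have hne1 := cycle_edgeSet_nonempty (hD.1 H₁ (Finset.mem_coe.mp h₁))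
        have hne2 := cycle_edgeSet_nonempty (hD.1 H₂ (Finset.mem_coe.mp h₂))
        simp only [dif_pos hne1, dif_pos hne2] at hfe
        have : hne1.some ∈ H₁.edgeSet ∩ H₂.edgeSet := ⟨hne1.some_mem, hfe ▸ hne2.some_mem⟩
        rw [hD.2.1 H₁ (Finset.mem_coe.mp h₁) H₂ (Finset.mem_coe.mp h₂) hne] at this
        exact this
  obtain ⟨e1ex, he1ex⟩ := hPex
  set N := sSup {n | ∃ D, P D ∧ D.card = n} with hNdef
  have hmemN : N ∈ {n | ∃ D, P D ∧ D.card = n} :=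
    Nat.sSup_mem ⟨e1ex.card, ⟨e1ex, he1ex, rfl⟩⟩ hbdd
  obtain ⟨D, hD, hDcard⟩ := hmemN
  have hmax : ∀ D', P D' → D'.card ≤ N := fun D' h => le_csSup hbdd ⟨D', h, rfl⟩
  refine ⟨(↑D : Set G.Subgraph), ?_, ?_, ?_, ?_⟩
  · exact fun H hH => hD.1 H (Finset.mem_coe.mp hH)
  · intro H₁ h₁ H₂ h₂ hne
    rw [Set.disjoint_iff_inter_eq_empty]
    exact hD.2.1 H₁ (Finset.mem_coe.mp h₁) H₂ (Finset.mem_coe.mp h₂) hne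
  · exact hD.2.2
  · intro C1 h₁c C2 h₂c hne12
    by_contra hgt
    push_neg at hgt
    have hs3 : 3 ≤ (C1.verts ∩ C2.verts).ncard := hgt
    have h₁ : C1 ∈ D := Finset.mem_coe.mp h₁c
    have h₂ : C2 ∈ D := Finset.mem_coe.mp h₂c
    have hcyc1 : IsCycleSubgraph C1 := hD.1 C1 h₁
    have hcyc2 : IsCycleSubgraph C2 := hD.1 C2 h₂
    obtain ⟨c, hc⟩ : (C1.verts ∩ C2.verts).Nonempty := by
      rw [← Set.ncard_pos (Set.toFinite _)]; omega
    set FU : SimpleGraph V := C1.spanningCoe ⊔ C2.spanningCoe with hFUdef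
    have hdisj12 : C1.edgeSet ∩ C2.edgeSet = ∅ := hD.2.1 C1 h₁ C2 h₂ hne12
    have hnbrdisj : ∀ z, C1.neighborSet z ∩ C2.neighborSet z = ∅ := by
      intro z
      ext w
      simp only [Set.mem_inter_iff, Set.mem_empty_iff_false, iff_false, not_and,
        SimpleGraph.Subgraph.mem_neighborSet]
      intro h1 h2
      have : s(z, w) ∈ C1.edgeSet ∩ C2.edgeSet :=
        ⟨SimpleGraph.Subgraph.mem_edgeSet.mpr h1, SimpleGraph.Subgraph.mem_edgeSet.mpr h2⟩
      rw [hdisj12] at this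
      exact this
    have hFUnbr : ∀ z, FU.neighborSet z = C1.neighborSet z ∪ C2.neighborSet z := by
      intro z
      ext w
      simp [hFUdef, SimpleGraph.mem_neighborSet, SimpleGraph.sup_adj]
    have hterm : ∀ (Ci : G.Subgraph), IsCycleSubgraph Ci →
        ∀ z, (Ci.neighborSet z).ncard = if z ∈ Ci.verts then 2 else 0 := by
      intro Ci hCi z
      by_cases hz : z ∈ Ci.verts
      · rw [if_pos hz]; exact hCi.2 z hz
      · rw [if_neg hz, subgraph_nbr_empty Ci hz, Set.ncard_empty]
    have hFUcard : ∀ z, (FU.neighborSet z).ncard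
        = (C1.neighborSet z).ncard + (C2.neighborSet z).ncard := by
      intro z
      rw [hFUnbr, Set.ncard_union_eq (Set.disjoint_iff_inter_eq_empty.mpr (hnbrdisj z))
        (Set.toFinite _) (Set.toFinite _)]
    have hFUeven : ∀ z, Even ((FU.neighborSet z).ncard) := by
      intro z
      rw [hFUcard, hterm C1 hcyc1, hterm C2 hcyc2]
      split_ifs <;> decide
    have hc4 : (FU.neighborSet c).ncard = 4 := by
      rw [hFUcard, hterm C1 hcyc1, hterm C2 hcyc2, if_pos hc.1, if_pos hc.2]
    have hFUle : FU ≤ G := sup_le C1.spanningCoe_le C2.spanningCoe_le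
    have hFUedge : FU.edgeSet = C1.edgeSet ∪ C2.edgeSet := by
      rw [hFUdef, SimpleGraph.edgeSet_sup]
      rfl
    have he1 : C1.edgeSet.ncard = C1.verts.ncard := handshake_cycle C1 hcyc1.2
    have he2 : C2.edgeSet.ncard = C2.verts.ncard := handshake_cycle C2 hcyc2.2
    have hv13 : 3 ≤ C1.verts.ncard := cycle_three_le_verts hcyc1
    have hv23 : 3 ≤ C2.verts.ncard := cycle_three_le_verts hcyc2
    have hEU : FU.edgeSet.ncard = C1.edgeSet.ncard + C2.edgeSet.ncard := by
      rw [hFUedge, Set.ncard_union_eq (Set.disjoint_iff_inter_eq_empty.mpr hdisj12)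
        (Set.toFinite _) (Set.toFinite _)]
    -- the graph W : FU minus all edges at c
    set W : SimpleGraph V := FU.deleteEdges {e | c ∈ e} with hWdef
    have hWedge : W.edgeSet = FU.edgeSet \ FU.incidenceSet c := by
      rw [hWdef, SimpleGraph.edgeSet_deleteEdges, SimpleGraph.incidenceSet,
        ← Set.diff_self_inter]
      rfl
    have hinc_card : (FU.incidenceSet c).ncard = 4 := by
      rw [← hc4, Set.ncard_eq_toFinset_card', Set.toFinset_card,
        Set.ncard_eq_toFinset_card', Set.toFinset_card]
      exact Fintype.card_congr (FU.incidenceSetEquivNeighborSet c)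
    have hWecard : W.edgeSet.ncard = FU.edgeSet.ncard - 4 := by
      rw [hWedge, Set.ncard_diff (FU.incidenceSet_subset c) (Set.toFinite _), hinc_card]
    have hvU : (C1.verts ∪ C2.verts).ncard + (C1.verts ∩ C2.verts).ncard
        = C1.verts.ncard + C2.verts.ncard :=
      Set.ncard_union_add_ncard_inter _ _
    have hsle : (C1.verts ∩ C2.verts).ncard ≤ C1.verts.ncard :=
      Set.ncard_le_ncard Set.inter_subset_left (Set.toFinite _)
    have hWne : W.edgeSet.Nonempty := by
      rw [← Set.ncard_pos (Set.toFinite _)]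
      omega
    have hnotac : ¬ W.IsAcyclic := by
      intro hac
      have hfb := forest_bound W.edgeSet.ncard W hac rfl hWne
      have hsupsub : W.support ⊆ (C1.verts ∪ C2.verts) \ {c} := by
        intro z hz
        obtain ⟨z', hz'⟩ := hz
        change W.Adj z z' at hz'
        rw [hWdef, SimpleGraph.deleteEdges_adj] at hz'
        obtain ⟨hadj, hnc⟩ := hz'
        simp only [Set.mem_setOf_eq, Sym2.mem_iff] at hnc
        push_neg at hnc
        constructor
        · rcases hadj with hadj | hadj
          · exact Or.inl (C1.spanningCoe_adj _ _ ▸ hadj).fst_mem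
          · exact Or.inr (C2.spanningCoe_adj _ _ ▸ hadj).fst_mem
        · simp only [Set.mem_singleton_iff]
          exact fun h => hnc.1 h.symm
      have hcU : c ∈ C1.verts ∪ C2.verts := Or.inl hc.1
      have hsupcard : W.support.ncard ≤ (C1.verts ∪ C2.verts).ncard - 1 := by
        have h1 : W.support.ncard ≤ ((C1.verts ∪ C2.verts) \ {c}).ncard :=
          Set.ncard_le_ncard hsupsub (Set.toFinite _)
        rwa [Set.ncard_diff_singleton_of_mem hcU] at h1
      omega
    rw [SimpleGraph.IsAcyclic] at hnotac
    push_neg at hnotac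
    obtain ⟨w0, p, hp⟩ := hnotac
    have hWleFU : W ≤ FU := SimpleGraph.deleteEdges_le _
    have hpW : ∀ e ∈ p.edges, e ∈ W.edgeSet := fun e he => p.edges_subset_edgeSet he
    have hpe : ∀ e ∈ p.edges, e ∈ G.edgeSet := by
      intro e he
      exact (SimpleGraph.edgeSet_subset_edgeSet.mpr (le_trans hWleFU hFUle)) (hpW e he)
    set q := p.transfer G hpe with hqdef
    have hq : q.IsCycle := hp.transfer hpe
    set Z := q.toSubgraph with hZdef
    have hZcyc : IsCycleSubgraph Z := isCycleSubgraph_toSubgraph q hq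
    have hZedges : Z.edgeSet = {e | e ∈ p.edges} := by
      rw [hZdef, Walk.edgeSet_toSubgraph, Walk.edgeSet_transfer, Walk.edgeSet]
    have hZsubW : Z.edgeSet ⊆ W.edgeSet := by
      rw [hZedges]; exact fun e he => hpW e he
    have hZsubFU : Z.edgeSet ⊆ FU.edgeSet :=
      fun e he => (SimpleGraph.edgeSet_subset_edgeSet.mpr hWleFU) (hZsubW he)
    have hWnoc : ∀ e ∈ W.edgeSet, c ∉ e := by
      intro e he
      rw [hWedge] at he
      intro hce
      exact he.2 ⟨he.1, hce⟩
    have hcZ : c ∉ Z.verts := by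
      intro hcv
      have h2 := hZcyc.2 c hcv
      have : (Z.neighborSet c).Nonempty := by
        rw [← Set.ncard_pos (Set.toFinite _), h2]; omega
      obtain ⟨w', hw'⟩ := this
      have : s(c, w') ∈ W.edgeSet := hZsubW (SimpleGraph.Subgraph.mem_edgeSet.mpr hw')
      exact hWnoc _ this (Sym2.mem_mk_left c w')
    set F' := FU.deleteEdges Z.edgeSet with hF'def
    have heven' := even_del hFUeven hZcyc.2 hZsubFU
    have hF'le : F' ≤ G := le_trans (SimpleGraph.deleteEdges_le _) hFUle
    have hF'edge : F'.edgeSet = FU.edgeSet \ Z.edgeSet := SimpleGraph.edgeSet_deleteEdges _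
    have hc4' : (F'.neighborSet c).ncard = 4 := by
      have : F'.neighborSet c = FU.neighborSet c := by
        ext w'
        simp only [SimpleGraph.mem_neighborSet, hF'def, SimpleGraph.deleteEdges_adj]
        constructor
        · exact fun h => h.1
        · intro h
          refine ⟨h, fun hin => ?_⟩
          exact hWnoc _ (hZsubW hin) (Sym2.mem_mk_left c w')
      rw [this, hc4]
    obtain ⟨DU, hDUcyc, hDUdisj, hDUun⟩ := veblen G F'.edgeSet.ncard F' hF'le rfl heven'
    have h2le : 2 ≤ DU.card := two_cycles_at DU hDUcyc hDUun hc4'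
    have hDUsub : ∀ H ∈ DU, H.edgeSet ⊆ F'.edgeSet := by
      intro H hH
      rw [← hDUun]
      exact Set.subset_biUnion_of_mem hH
    have hZne : Z.edgeSet.Nonempty := cycle_edgeSet_nonempty hZcyc
    have hZnotin : Z ∉ DU := by
      intro hZin
      obtain ⟨e, he⟩ := hZne
      have := hDUsub Z hZin he
      rw [hF'edge] at this
      exact this.2 he
    set M : Finset G.Subgraph := insert Z DU with hMdef
    have hMcard : 3 ≤ M.card := by
      rw [hMdef, Finset.card_insert_of_notMem hZnotin]
      omega
    have hMcyc : ∀ H ∈ M, IsCycleSubgraph H := by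
      intro H hH
      rcases Finset.mem_insert.mp hH with rfl | hH
      · exact hZcyc
      · exact hDUcyc H hH
    have hMdisj : ∀ H₁ ∈ M, ∀ H₂ ∈ M, H₁ ≠ H₂ → H₁.edgeSet ∩ H₂.edgeSet = ∅ := by
      intro H₁ hh₁ H₂ hh₂ hhne
      rcases Finset.mem_insert.mp hh₁ with rfl | hh₁ <;>
        rcases Finset.mem_insert.mp hh₂ with rfl | hh₂
      · exact absurd rfl hhne
      · ext e
        simp only [Set.mem_inter_iff, Set.mem_empty_iff_false, iff_false, not_and]
        intro heZ heH
        have := hDUsub H₂ hh₂ heH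
        rw [hF'edge] at this
        exact this.2 heZ
      · ext e
        simp only [Set.mem_inter_iff, Set.mem_empty_iff_false, iff_false, not_and]
        intro heH heZ
        have := hDUsub H₁ hh₁ heH
        rw [hF'edge] at this
        exact this.2 heZ
      · exact hDUdisj H₁ hh₁ H₂ hh₂ hhne
    have hMun : (⋃ H ∈ M, SimpleGraph.Subgraph.edgeSet H) = FU.edgeSet := by
      rw [hMdef, Finset.set_biUnion_insert, hDUun, hF'edge, Set.union_diff_cancel hZsubFU]
    have hMsub : ∀ H ∈ M, H.edgeSet ⊆ FU.edgeSet := by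
      intro H hH
      rw [← hMun]
      exact Set.subset_biUnion_of_mem hH
    -- the old part
    set Dold : Finset G.Subgraph := D \ {C1, C2} with hDolddef
    have holddisj : ∀ K ∈ Dold, K.edgeSet ∩ FU.edgeSet = ∅ := by
      intro K hK
      rw [hDolddef, Finset.mem_sdiff] at hK
      obtain ⟨hKD, hKn⟩ := hK
      simp only [Finset.mem_insert, Finset.mem_singleton] at hKn
      push_neg at hKn
      rw [hFUedge]
      ext e
      simp only [Set.mem_inter_iff, Set.mem_empty_iff_false, iff_false, not_and]
      intro heK heU
      rcases heU with heU | heU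
      · have := hD.2.1 K hKD C1 h₁ hKn.1
        have : e ∈ K.edgeSet ∩ C1.edgeSet := ⟨heK, heU⟩
        rw [hD.2.1 K hKD C1 h₁ hKn.1] at this
        exact this
      · have : e ∈ K.edgeSet ∩ C2.edgeSet := ⟨heK, heU⟩
        rw [hD.2.1 K hKD C2 h₂ hKn.2] at this
        exact this
    have hsepne : ∀ H ∈ M, H ∉ Dold := by
      intro H hH hHold
      obtain ⟨e, he⟩ := cycle_edgeSet_nonempty (hMcyc H hH)
      have : e ∈ H.edgeSet ∩ FU.edgeSet := ⟨he, hMsub H hH he⟩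
      rw [holddisj H hHold] at this
      exact this
    have hfindisj : Disjoint Dold M := by
      rw [Finset.disjoint_right]
      exact fun H hH => hsepne H hH
    set D' : Finset G.Subgraph := Dold ∪ M with hD'def
    have hpairsub : ({C1, C2} : Finset G.Subgraph) ⊆ D := by
      intro K hK
      rcases Finset.mem_insert.mp hK with rfl | hK
      · exact h₁
      · rw [Finset.mem_singleton] at hK
        subst hK
        exact h₂
    have holdcard : Dold.card = D.card - 2 := by
      rw [hDolddef, Finset.card_sdiff_of_subset hpairsub, Finset.card_insert_of_notMem
        (by simp [hne12]), Finset.card_singleton]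
    have hD2 : 2 ≤ D.card := by
      have := Finset.card_le_card hpairsub
      rw [Finset.card_insert_of_notMem (by simp [hne12]), Finset.card_singleton] at this
      omega
    have hD'card : D'.card = D.card - 2 + M.card := by
      rw [hD'def, Finset.card_union_of_disjoint hfindisj, holdcard]
    have hP' : P D' := by
      refine ⟨?_, ?_, ?_⟩
      · intro H hH
        rcases Finset.mem_union.mp hH with hH | hH
        · exact hD.1 H (Finset.mem_sdiff.mp hH).1
        · exact hMcyc H hH
      · intro H₁ hh₁ H₂ hh₂ hhne
        rcases Finset.mem_union.mp hh₁ with hh₁ | hh₁ <;>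
          rcases Finset.mem_union.mp hh₂ with hh₂ | hh₂
        · exact hD.2.1 H₁ (Finset.mem_sdiff.mp hh₁).1 H₂ (Finset.mem_sdiff.mp hh₂).1 hhne
        · ext e
          simp only [Set.mem_inter_iff, Set.mem_empty_iff_false, iff_false, not_and]
          intro he1 he2
          have : e ∈ H₁.edgeSet ∩ FU.edgeSet := ⟨he1, hMsub H₂ hh₂ he2⟩
          rw [holddisj H₁ hh₁] at this
          exact this
        · ext e
          simp only [Set.mem_inter_iff, Set.mem_empty_iff_false, iff_false, not_and]
          intro he1 he2
          have : e ∈ H₂.edgeSet ∩ FU.edgeSet := ⟨he2, hMsub H₁ hh₁ he1⟩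
          rw [holddisj H₂ hh₂] at this
          exact this
        · exact hMdisj H₁ hh₁ H₂ hh₂ hhne
      · have hsplit : D = Dold ∪ {C1, C2} := by
          rw [hDolddef, Finset.sdiff_union_of_subset hpairsub]
        have h1 : (⋃ H ∈ D', SimpleGraph.Subgraph.edgeSet H)
            = (⋃ H ∈ Dold, SimpleGraph.Subgraph.edgeSet H) ∪ FU.edgeSet := by
          rw [hD'def, Finset.set_biUnion_union, hMun]
        have h2 : (⋃ H ∈ D, SimpleGraph.Subgraph.edgeSet H)
            = (⋃ H ∈ Dold, SimpleGraph.Subgraph.edgeSet H) ∪ FU.edgeSet := by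
          conv_lhs => rw [hsplit]
          rw [Finset.set_biUnion_union, hFUedge]
          congr 1
          rw [Finset.set_biUnion_insert, Finset.set_biUnion_singleton]
        rw [h1, ← h2]
        exact hD.2.2
    have := hmax D' hP'
    rw [hD'card] at this
    omega
end
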